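/- arXiv:1707.09918 — 2 statements merged into one kernel-verified Lean document; each statement's English description precedes it below -/
import Mathlib

section
/- The bounce-free generating functions satisfy f_ee(x)·((1+g_en(x))² − g_ee(x)·g_nn(x)) = g_ee(x), f_nn(x)·((1+g_en(x))² − g_ee(x)·g_nn(x)) = g_nn(x), and (1 − f_en(x))·((1+g_en(x))² − g_ee(x)·g_nn(x)) = 1 + g_en(x). -/
/-!
Lattice paths with unit East (`true`) and unit North (`false`) steps,
bounces with respect to the line `y = (β/α)·x`, and the associated
generating functions over `ℚ`.
-/

/-- A lattice path is a list of unit steps: `true` = East, `false` = North. -/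
abbrev LatticePath := List Bool

/-- `p` is a lattice path from `(0,0)` to `(α*k, β*k)`, i.e. a member of `L_{β/α}(k)`. -/
def InL (α β k : ℕ) (p : LatticePath) : Prop :=
  p.count true = α * k ∧ p.count false = β * k

/-- `p` has a left bounce at step index `i`: step `i` is an E-step, step `i+1` is an
N-step, and their common endpoint (the point reached after `i+1` steps) lies on the
line `y = (β/α)·x`, i.e. `α·y = β·x`. -/
def IsLeftBounce (α β : ℕ) (p : LatticePath) (i : ℕ) : Prop :=
  p[i]? = some true ∧ p[i + 1]? = some false ∧
    α * ((p.take (i + 1)).count false) = β * ((p.take (i + 1)).count true)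

/-- `p` has a right bounce at step index `i`: step `i` is an N-step, step `i+1` is an
E-step, and their common endpoint lies on the line `y = (β/α)·x`. -/
def IsRightBounce (α β : ℕ) (p : LatticePath) (i : ℕ) : Prop :=
  p[i]? = some false ∧ p[i + 1]? = some true ∧
    α * ((p.take (i + 1)).count false) = β * ((p.take (i + 1)).count true)

/-- The number of left bounces of `p` with respect to the line `y = (β/α)·x`. -/
noncomputable def leftBounces (α β : ℕ) (p : LatticePath) : ℕ :=
  {i | IsLeftBounce α β p i}.ncard

/-- The number of right bounces of `p` with respect to the line `y = (β/α)·x`. -/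
noncomputable def rightBounces (α β : ℕ) (p : LatticePath) : ℕ :=
  {i | IsRightBounce α β p i}.ncard

/-- `p` is bounce-free: it has no left and no right bounces. -/
def BounceFree (α β : ℕ) (p : LatticePath) : Prop :=
  (∀ i, ¬ IsLeftBounce α β p i) ∧ (∀ i, ¬ IsRightBounce α β p i)

/-- The first step of `p` is `a`. -/
def FirstStep (p : LatticePath) (a : Bool) : Prop := p.head? = some a

/-- The last step of `p` is `b`. -/
def LastStep (p : LatticePath) (b : Bool) : Prop := p.getLast? = some b

/-- The generating function `Σ_{k≥1} |S k|·xᵏ ∈ ℚ[[x]]` of a family of path sets. -/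
noncomputable def gfOf (S : ℕ → Set LatticePath) : PowerSeries ℚ :=
  PowerSeries.mk fun k => if k = 0 then 0 else ((S k).ncard : ℚ)

/-- `g(x) = Σ_{k≥1} C((α+β)k, αk)·xᵏ`, counting all paths in `L_{β/α}(k)`. -/
noncomputable def gSer (α β : ℕ) : PowerSeries ℚ :=
  PowerSeries.mk fun k => if k = 0 then 0 else ((((α + β) * k).choose (α * k) : ℕ) : ℚ)

/-- `g_ee(x) = Σ_{k≥1} C((α+β)k−2, αk−2)·xᵏ`, counting EE-paths in `L_{β/α}(k)`.
We write the lower index as `βk = ((α+β)k−2) − (αk−2)`, which equals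
`C((α+β)k−2, αk−2)` by the symmetry of binomial coefficients and correctly
implements the convention `C(n, −1) = 0` (needed when `αk = 1`), which ℕ-truncated
subtraction would not. -/
noncomputable def geeSer (α β : ℕ) : PowerSeries ℚ :=
  PowerSeries.mk fun k => if k = 0 then 0 else ((((α + β) * k - 2).choose (β * k) : ℕ) : ℚ)

/-- `g_en(x) = Σ_{k≥1} C((α+β)k−2, αk−1)·xᵏ`, counting EN-paths in `L_{β/α}(k)`. -/
noncomputable def genSer (α β : ℕ) : PowerSeries ℚ :=
  PowerSeries.mk fun k => if k = 0 then 0 else ((((α + β) * k - 2).choose (α * k - 1) : ℕ) : ℚ)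

/-- `g_nn(x) = Σ_{k≥1} C((α+β)k−2, αk)·xᵏ`, counting NN-paths in `L_{β/α}(k)`. -/
noncomputable def gnnSer (α β : ℕ) : PowerSeries ℚ :=
  PowerSeries.mk fun k => if k = 0 then 0 else ((((α + β) * k - 2).choose (α * k) : ℕ) : ℚ)

/-- `f_ee(x)`: generating function of bounce-free EE-paths in `L_{β/α}(k)`. -/
noncomputable def feeSer (α β : ℕ) : PowerSeries ℚ :=
  gfOf fun k => {p | InL α β k p ∧ BounceFree α β p ∧ FirstStep p true ∧ LastStep p true}

/-- `f_en(x)`: generating function of bounce-free EN-paths in `L_{β/α}(k)`. -/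
noncomputable def fenSer (α β : ℕ) : PowerSeries ℚ :=
  gfOf fun k => {p | InL α β k p ∧ BounceFree α β p ∧ FirstStep p true ∧ LastStep p false}

/-- `f_nn(x)`: generating function of bounce-free NN-paths in `L_{β/α}(k)`. -/
noncomputable def fnnSer (α β : ℕ) : PowerSeries ℚ :=
  gfOf fun k => {p | InL α β k p ∧ BounceFree α β p ∧ FirstStep p false ∧ LastStep p false}

/-- `f(x)`: generating function of all bounce-free paths in `L_{β/α}(k)`. -/
noncomputable def fSer (α β : ℕ) : PowerSeries ℚ :=
  gfOf fun k => {p | InL α β k p ∧ BounceFree α β p}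

/-- `B_{ℓ,r}(x)`: generating function of paths in `L_{β/α}(k)` with exactly `ℓ`
left bounces and exactly `r` right bounces. -/
noncomputable def BSer (α β ℓ r : ℕ) : PowerSeries ℚ :=
  gfOf fun k => {p | InL α β k p ∧ leftBounces α β p = ℓ ∧ rightBounces α β p = r}

/-- The Fuss–Catalan generating function `c_α(x) = Σ_{k≥0} 1/(αk+1)·C((α+1)k, k)·xᵏ`. -/
noncomputable def fussCatalan (α : ℕ) : PowerSeries ℚ :=
  PowerSeries.mk fun k => (1 / ((α * k + 1 : ℕ) : ℚ)) * ((((α + 1) * k).choose k : ℕ) : ℚ)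

/-- For slope `1/α`: `p` has a horizontal cross at the lattice point `(α*i, i)` (`i ≥ 1`):
`p` passes through `(α*i, i)` (so the prefix of length `(α+1)*i` has exactly `α*i`
E-steps), and both the step ending there and the step starting there are E-steps. -/
def HasHCrossAt (α : ℕ) (p : LatticePath) (i : ℕ) : Prop :=
  1 ≤ i ∧ (p.take ((α + 1) * i)).count true = α * i ∧
    p[(α + 1) * i - 1]? = some true ∧ p[(α + 1) * i]? = some true

/-- `p` has no horizontal crosses with respect to the line `y = x/α`. -/
def NoHCross (α : ℕ) (p : LatticePath) : Prop := ∀ i, ¬ HasHCrossAt α p i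

def cntSet (a b : ℕ) : Set LatticePath := {p | p.count true = a ∧ p.count false = b}

lemma cntSet_sub (a b : ℕ) : cntSet a b ⊆ {l : List Bool | l.length = a + b} := by
  rintro p ⟨h1, h2⟩
  simp only [Set.mem_setOf_eq, ← List.count_true_add_count_false p, h1, h2]

lemma cntSet_finite (a b : ℕ) : (cntSet a b).Finite :=
  (List.finite_length_eq Bool (a + b)).subset (cntSet_sub a b)

lemma cntSet_zero_right (a : ℕ) : cntSet a 0 = {List.replicate a true} := by
  ext p
  constructor
  · rintro ⟨h1, h2⟩
    have hl : p.length = a := by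
      have := List.count_true_add_count_false p; omega
    have : ∀ x ∈ p, x = true := by
      intro x hx
      cases x
      · exact absurd hx (List.count_eq_zero.mp h2)
      · rfl
    exact List.eq_replicate_iff.mpr ⟨hl, this⟩ |>.symm ▸ rfl
  · rintro rfl
    constructor <;> simp [List.count_replicate]

lemma cntSet_zero_left (b : ℕ) : cntSet 0 b = {List.replicate b false} := by
  ext p
  constructor
  · rintro ⟨h1, h2⟩
    have hl : p.length = b := by
      have := List.count_true_add_count_false p; omega
    have : ∀ x ∈ p, x = false := by
      intro x hx
      cases x
      · rfl
      · exact absurd hx (List.count_eq_zero.mp h1)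
    exact List.eq_replicate_iff.mpr ⟨hl, this⟩ |>.symm ▸ rfl
  · rintro rfl
    constructor <;> simp [List.count_replicate]

lemma cntSet_succ_succ (a b : ℕ) :
    cntSet (a+1) (b+1) =
      (true :: ·) '' cntSet a (b+1) ∪ (false :: ·) '' cntSet (a+1) b := by
  ext p
  constructor
  · rintro ⟨h1, h2⟩
    match p with
    | [] => simp [List.count_nil] at h1
    | x :: t =>
      cases x
      · right
        exact ⟨t, ⟨by simpa using h1, by simpa using h2⟩, rfl⟩
      · left
        exact ⟨t, ⟨by simpa using h1, by simpa using h2⟩, rfl⟩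
  · rintro (⟨q, ⟨h1, h2⟩, rfl⟩ | ⟨q, ⟨h1, h2⟩, rfl⟩) <;>
      constructor <;> simp [h1, h2]

lemma ncard_cntSet_aux : ∀ n a b, a + b = n → (cntSet a b).ncard = (a + b).choose a := by
  intro n
  induction n using Nat.strong_induction_on with
  | _ n ih =>
    intro a b h
    subst h
    match a, b with
    | 0, b => simp [cntSet_zero_left]
    | a+1, 0 => simp [cntSet_zero_right]
    | a+1, b+1 =>
      rw [cntSet_succ_succ]
      have hd : Disjoint ((true :: ·) '' cntSet a (b+1)) ((false :: ·) '' cntSet (a+1) b) := by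
        rw [Set.disjoint_left]
        rintro p ⟨q, _, rfl⟩ ⟨r, _, h⟩
        simp at h
      rw [Set.ncard_union_eq hd ((cntSet_finite _ _).image _) ((cntSet_finite _ _).image _),
          Set.ncard_image_of_injective _ (fun x y h => by simpa using h),
          Set.ncard_image_of_injective _ (fun x y h => by simpa using h),
          ih (a + (b+1)) (by omega) a (b+1) rfl,
          ih ((a+1) + b) (by omega) (a+1) b rfl]
      have h1 : a + 1 + (b + 1) = (a + (b+1)) + 1 := by ring
      rw [h1, Nat.choose_succ_succ]
      congr 2
      omega

lemma ncard_cntSet (a b : ℕ) : (cntSet a b).ncard = (a + b).choose a :=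
  ncard_cntSet_aux (a+b) a b rfl

def Gset (α β : ℕ) (a b : Bool) (k : ℕ) : Set LatticePath :=
  {p | InL α β k p ∧ FirstStep p a ∧ LastStep p b}

lemma Gset_sub (α β : ℕ) (a b : Bool) (k : ℕ) :
    Gset α β a b k ⊆ {l : List Bool | l.length = (α + β) * k} := by
  rintro p ⟨⟨h1, h2⟩, -, -⟩
  have := List.count_true_add_count_false p
  have h3 : (α + β) * k = α * k + β * k := by ring
  simp only [Set.mem_setOf_eq]
  omega

lemma Gset_finite (α β : ℕ) (a b : Bool) (k : ℕ) : (Gset α β a b k).Finite :=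
  (List.finite_length_eq Bool _).subset (Gset_sub α β a b k)

lemma getLast?_cons_ne (a : Bool) {t : List Bool} (ht : t ≠ []) :
    (a :: t).getLast? = t.getLast? := by
  cases t with
  | nil => exact absurd rfl ht
  | cons x l => simp

lemma mem_Gset_iff (α β : ℕ) (a b : Bool) (k : ℕ) (p : LatticePath) :
    p ∈ Gset α β a b k ↔
      p.count true = α * k ∧ p.count false = β * k ∧ p.head? = some a ∧ p.getLast? = some b := by
  constructor
  · rintro ⟨⟨h1, h2⟩, h3, h4⟩; exact ⟨h1, h2, h3, h4⟩
  · rintro ⟨h1, h2, h3, h4⟩; exact ⟨⟨h1, h2⟩, h3, h4⟩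

lemma Gset_eq_EE (α β k : ℕ) (hA : 2 ≤ α * k) (hB : 1 ≤ β * k) :
    Gset α β true true k = (fun q => true :: (q ++ [true])) '' cntSet (α * k - 2) (β * k) := by
  ext p
  rw [mem_Gset_iff]
  constructor
  · rintro ⟨h1, h2, h3, h4⟩
    obtain ⟨t, rfl⟩ := List.head?_eq_some_iff.mp h3
    have ht : t ≠ [] := by
      rintro rfl; rw [show List.count false [true] = 0 from rfl] at h2; omega
    rw [getLast?_cons_ne _ ht] at h4
    obtain ⟨q, rfl⟩ := List.getLast?_eq_some_iff.mp h4
    refine ⟨q, ⟨?_, ?_⟩, rfl⟩ <;> simp [List.count_cons, List.count_append] at h1 h2 ⊢ <;> omega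
  · rintro ⟨q, ⟨h1, h2⟩, rfl⟩
    refine ⟨?_, ?_, rfl, ?_⟩
    · simp [List.count_cons, List.count_append, h1]; omega
    · simp [List.count_cons, List.count_append, h2]
    · show ((true : Bool) :: (q ++ [true])).getLast? = some true
      rw [show (true : Bool) :: (q ++ [true]) = (true :: q) ++ [true] by simp, List.getLast?_concat]

lemma Gset_EE_empty (α β k : ℕ) (hA : α * k = 1) (hB : 1 ≤ β * k) :
    Gset α β true true k = ∅ := by
  ext p
  simp only [mem_Gset_iff, Set.mem_empty_iff_false, iff_false]
  rintro ⟨h1, h2, h3, h4⟩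
  obtain ⟨t, rfl⟩ := List.head?_eq_some_iff.mp h3
  have ht : t ≠ [] := by rintro rfl; rw [show List.count false [true] = 0 from rfl] at h2; omega
  rw [getLast?_cons_ne _ ht] at h4
  obtain ⟨q, rfl⟩ := List.getLast?_eq_some_iff.mp h4
  simp [List.count_cons, List.count_append] at h1
  omega

lemma Gset_NN_empty (α β k : ℕ) (hB : β * k = 1) (hA : 1 ≤ α * k) :
    Gset α β false false k = ∅ := by
  ext p
  simp only [mem_Gset_iff, Set.mem_empty_iff_false, iff_false]
  rintro ⟨h1, h2, h3, h4⟩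
  obtain ⟨t, rfl⟩ := List.head?_eq_some_iff.mp h3
  have ht : t ≠ [] := by rintro rfl; rw [show List.count true [false] = 0 from rfl] at h1; omega
  rw [getLast?_cons_ne _ ht] at h4
  obtain ⟨q, rfl⟩ := List.getLast?_eq_some_iff.mp h4
  simp [List.count_cons, List.count_append] at h2
  omega

lemma Gset_eq_NN (α β k : ℕ) (hB : 2 ≤ β * k) (hA : 1 ≤ α * k) :
    Gset α β false false k = (fun q => false :: (q ++ [false])) '' cntSet (α * k) (β * k - 2) := by
  ext p
  rw [mem_Gset_iff]
  constructor
  · rintro ⟨h1, h2, h3, h4⟩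
    obtain ⟨t, rfl⟩ := List.head?_eq_some_iff.mp h3
    have ht : t ≠ [] := by rintro rfl; rw [show List.count true [false] = 0 from rfl] at h1; omega
    rw [getLast?_cons_ne _ ht] at h4
    obtain ⟨q, rfl⟩ := List.getLast?_eq_some_iff.mp h4
    refine ⟨q, ⟨?_, ?_⟩, rfl⟩ <;> simp [List.count_cons, List.count_append] at h1 h2 ⊢ <;> omega
  · rintro ⟨q, ⟨h1, h2⟩, rfl⟩
    refine ⟨?_, ?_, rfl, ?_⟩
    · simp [List.count_cons, List.count_append, h1]
    · simp [List.count_cons, List.count_append, h2]; omega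
    · show ((false : Bool) :: (q ++ [false])).getLast? = some false
      rw [show (false : Bool) :: (q ++ [false]) = (false :: q) ++ [false] by simp, List.getLast?_concat]

lemma Gset_eq_EN (α β k : ℕ) (hA : 1 ≤ α * k) (hB : 1 ≤ β * k) :
    Gset α β true false k = (fun q => true :: (q ++ [false])) '' cntSet (α * k - 1) (β * k - 1) := by
  ext p
  rw [mem_Gset_iff]
  constructor
  · rintro ⟨h1, h2, h3, h4⟩
    obtain ⟨t, rfl⟩ := List.head?_eq_some_iff.mp h3
    have ht : t ≠ [] := by rintro rfl; rw [show List.count false [true] = 0 from rfl] at h2; omega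
    rw [getLast?_cons_ne _ ht] at h4
    obtain ⟨q, rfl⟩ := List.getLast?_eq_some_iff.mp h4
    refine ⟨q, ⟨?_, ?_⟩, rfl⟩ <;> simp [List.count_cons, List.count_append] at h1 h2 ⊢ <;> omega
  · rintro ⟨q, ⟨h1, h2⟩, rfl⟩
    refine ⟨?_, ?_, rfl, ?_⟩
    · simp [List.count_cons, List.count_append, h1]; omega
    · simp [List.count_cons, List.count_append, h2]; omega
    · show ((true : Bool) :: (q ++ [false])).getLast? = some false
      rw [show (true : Bool) :: (q ++ [false]) = (true :: q) ++ [false] by simp, List.getLast?_concat]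

lemma Gset_eq_NE (α β k : ℕ) (hA : 1 ≤ α * k) (hB : 1 ≤ β * k) :
    Gset α β false true k = (fun q => false :: (q ++ [true])) '' cntSet (α * k - 1) (β * k - 1) := by
  ext p
  rw [mem_Gset_iff]
  constructor
  · rintro ⟨h1, h2, h3, h4⟩
    obtain ⟨t, rfl⟩ := List.head?_eq_some_iff.mp h3
    have ht : t ≠ [] := by rintro rfl; rw [show List.count true [false] = 0 from rfl] at h1; omega
    rw [getLast?_cons_ne _ ht] at h4
    obtain ⟨q, rfl⟩ := List.getLast?_eq_some_iff.mp h4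
    refine ⟨q, ⟨?_, ?_⟩, rfl⟩ <;> simp [List.count_cons, List.count_append] at h1 h2 ⊢ <;> omega
  · rintro ⟨q, ⟨h1, h2⟩, rfl⟩
    refine ⟨?_, ?_, rfl, ?_⟩
    · simp [List.count_cons, List.count_append, h1]; omega
    · simp [List.count_cons, List.count_append, h2]; omega
    · show ((false : Bool) :: (q ++ [true])).getLast? = some true
      rw [show (false : Bool) :: (q ++ [true]) = (false :: q) ++ [true] by simp, List.getLast?_concat]

lemma cons_append_injective (a b : Bool) :
    Function.Injective (fun q : List Bool => a :: (q ++ [b])) := by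
  intro x y h
  simpa using h

lemma ncard_Gset_EE (α β k : ℕ) (hA : 1 ≤ α * k) (hB : 1 ≤ β * k) :
    (Gset α β true true k).ncard = ((α + β) * k - 2).choose (β * k) := by
  rcases Nat.lt_or_ge (α * k) 2 with h | h
  · have hA1 : α * k = 1 := by omega
    rw [Gset_EE_empty α β k hA1 hB, Set.ncard_empty]
    have : (α + β) * k - 2 < β * k := by
      have : (α + β) * k = α * k + β * k := by ring
      omega
    exact (Nat.choose_eq_zero_of_lt this).symm
  · rw [Gset_eq_EE α β k h hB,
      Set.ncard_image_of_injective _ (cons_append_injective true true), ncard_cntSet]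
    have h2 : α * k - 2 + β * k = (α + β) * k - 2 := by
      have : (α + β) * k = α * k + β * k := by ring
      omega
    rw [h2]
    exact Nat.choose_symm_of_eq_add (by omega)

lemma ncard_Gset_NN (α β k : ℕ) (hA : 1 ≤ α * k) (hB : 1 ≤ β * k) :
    (Gset α β false false k).ncard = ((α + β) * k - 2).choose (α * k) := by
  rcases Nat.lt_or_ge (β * k) 2 with h | h
  · have hB1 : β * k = 1 := by omega
    rw [Gset_NN_empty α β k hB1 hA, Set.ncard_empty]
    have : (α + β) * k - 2 < α * k := by
      have : (α + β) * k = α * k + β * k := by ring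
      omega
    exact (Nat.choose_eq_zero_of_lt this).symm
  · rw [Gset_eq_NN α β k h hA,
      Set.ncard_image_of_injective _ (cons_append_injective false false), ncard_cntSet]
    congr 1
    have : (α + β) * k = α * k + β * k := by ring
    omega

lemma ncard_Gset_EN (α β k : ℕ) (hA : 1 ≤ α * k) (hB : 1 ≤ β * k) :
    (Gset α β true false k).ncard = ((α + β) * k - 2).choose (α * k - 1) := by
  rw [Gset_eq_EN α β k hA hB,
    Set.ncard_image_of_injective _ (cons_append_injective true false), ncard_cntSet]
  congr 1
  have : (α + β) * k = α * k + β * k := by ring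
  omega

lemma ncard_Gset_NE (α β k : ℕ) (hA : 1 ≤ α * k) (hB : 1 ≤ β * k) :
    (Gset α β false true k).ncard = ((α + β) * k - 2).choose (α * k - 1) := by
  rw [Gset_eq_NE α β k hA hB,
    Set.ncard_image_of_injective _ (cons_append_injective false true), ncard_cntSet]
  congr 1
  have : (α + β) * k = α * k + β * k := by ring
  omega

def IsBounce (α β : ℕ) (p : LatticePath) (i : ℕ) : Prop :=
  IsLeftBounce α β p i ∨ IsRightBounce α β p i

lemma bounceFree_iff (α β : ℕ) (p : LatticePath) :
    BounceFree α β p ↔ ∀ i, ¬ IsBounce α β p i := by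
  unfold BounceFree IsBounce
  constructor
  · rintro ⟨h1, h2⟩ i (h | h)
    exacts [h1 i h, h2 i h]
  · intro h
    exact ⟨fun i hi => h i (Or.inl hi), fun i hi => h i (Or.inr hi)⟩

def Fset (α β : ℕ) (a b : Bool) (k : ℕ) : Set LatticePath :=
  {p | InL α β k p ∧ BounceFree α β p ∧ FirstStep p a ∧ LastStep p b}

lemma Fset_sub_Gset (α β : ℕ) (a b : Bool) (k : ℕ) : Fset α β a b k ⊆ Gset α β a b k := by
  rintro p ⟨h1, _, h3, h4⟩; exact ⟨h1, h3, h4⟩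

lemma Fset_finite (α β : ℕ) (a b : Bool) (k : ℕ) : (Fset α β a b k).Finite :=
  (Gset_finite α β a b k).subset (Fset_sub_Gset α β a b k)

lemma length_of_InL {α β k : ℕ} {p : LatticePath} (h : InL α β k p) :
    p.length = (α + β) * k := by
  obtain ⟨h1, h2⟩ := h
  have := List.count_true_add_count_false p
  have h3 : (α + β) * k = α * k + β * k := by ring
  omega

-- bounce transfer: below the cut
lemma isBounce_append_low {α β : ℕ} {q r : List Bool} {i : ℕ} (h : i + 1 < q.length) :
    IsBounce α β (q ++ r) i ↔ IsBounce α β q i := by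
  unfold IsBounce IsLeftBounce IsRightBounce
  rw [List.getElem?_append, if_pos (by omega), List.getElem?_append, if_pos h,
    List.take_append_of_le_length (by omega : i + 1 ≤ q.length)]

-- bounce transfer: above the cut
lemma isBounce_append_high {α β j : ℕ} {q r : List Bool} {m : ℕ}
    (hq1 : q.count true = α * j) (hq2 : q.count false = β * j) :
    IsBounce α β (q ++ r) (q.length + m) ↔ IsBounce α β r m := by
  have hkey : ∀ s : List Bool,
      α * ((q ++ s).count false) = β * ((q ++ s).count true)
        ↔ α * s.count false = β * s.count true := by
    intro s
    rw [List.count_append, List.count_append, hq1, hq2, Nat.mul_add, Nat.mul_add,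
      show α * (β * j) = β * (α * j) by ring]
    exact ⟨fun h => Nat.add_left_cancel h, fun h => by rw [h]⟩
  have e1 : (q ++ r)[q.length + m]? = r[m]? := by
    rw [List.getElem?_append, if_neg (by omega)]
    congr 1
    omega
  have e2 : (q ++ r)[q.length + m + 1]? = r[m + 1]? := by
    rw [List.getElem?_append, if_neg (by omega)]
    congr 1
    omega
  have e3 : (q ++ r).take (q.length + m + 1) = q ++ r.take (m + 1) := by
    rw [show q.length + m + 1 = q.length + (m + 1) by omega, List.take_append,
      List.take_of_length_le (by omega), Nat.add_sub_cancel_left]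
  unfold IsBounce IsLeftBounce IsRightBounce
  rw [e1, e2, e3, hkey]

-- the bounce at the cut point
lemma isBounce_cut {α β j : ℕ} {q r : List Bool} {c : Bool}
    (hq1 : q.count true = α * j) (hq2 : q.count false = β * j)
    (hqne : q ≠ []) (hql : q.getLast? = some c) (hrh : r.head? = some (!c)) :
    IsBounce α β (q ++ r) (q.length - 1) := by
  have hlen : 1 ≤ q.length := List.length_pos_iff.mpr hqne
  have e0 : q.length - 1 + 1 = q.length := by omega
  have e1 : (q ++ r)[q.length - 1]? = some c := by
    rw [List.getElem?_append, if_pos (by omega), ← List.getLast?_eq_getElem?, hql]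
  have e2 : (q ++ r)[q.length - 1 + 1]? = some (!c) := by
    rw [e0, List.getElem?_append, if_neg (by omega), Nat.sub_self, ← List.head?_eq_getElem?, hrh]
  have e3 : (q ++ r).take (q.length - 1 + 1) = q := by
    rw [e0, List.take_left]
  have e4 : α * ((q ++ r).take (q.length - 1 + 1)).count false
      = β * ((q ++ r).take (q.length - 1 + 1)).count true := by
    rw [e3, hq1, hq2]; ring
  cases c with
  | true => exact Or.inl ⟨e1, by simpa using e2, e4⟩
  | false => exact Or.inr ⟨e1, by simpa using e2, e4⟩

-- first-bounce characterisation of a recomposed path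
lemma firstBounce_of {α β j : ℕ} {q r : List Bool} {c : Bool}
    (hq1 : q.count true = α * j) (hq2 : q.count false = β * j)
    (hbf : BounceFree α β q)
    (hqne : q ≠ []) (hql : q.getLast? = some c) (hrh : r.head? = some (!c)) :
    (∀ i, i < q.length - 1 → ¬ IsBounce α β (q ++ r) i) ∧
      IsBounce α β (q ++ r) (q.length - 1) := by
  refine ⟨fun i hi hb => ?_, isBounce_cut hq1 hq2 hqne hql hrh⟩
  have hlen : 1 ≤ q.length := List.length_pos_iff.mpr hqne
  rw [isBounce_append_low (by omega)] at hb
  exact (bounceFree_iff α β q).mp hbf i hb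

lemma bounce_point_coprime {α β ct cf : ℕ} (hα : 0 < α) (hcop : Nat.Coprime α β)
    (h : α * cf = β * ct) : ∃ j, ct = α * j ∧ cf = β * j := by
  have hdvd : α ∣ ct := by
    have : α ∣ β * ct := ⟨cf, h.symm⟩
    exact (Nat.Coprime.dvd_of_dvd_mul_left hcop this)
  obtain ⟨j, rfl⟩ := hdvd
  refine ⟨j, rfl, ?_⟩
  have : α * cf = α * (β * j) := by rw [h]; ring
  exact Nat.eq_of_mul_eq_mul_left hα this

lemma head?_take {p : List Bool} {n : ℕ} (hn : 0 < n) : (p.take n).head? = p.head? := by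
  cases p with
  | nil => simp
  | cons x t =>
    obtain ⟨m, rfl⟩ := Nat.exists_eq_succ_of_ne_zero (Nat.pos_iff_ne_zero.mp hn)
    simp

lemma getLast?_append_right' {q r : List Bool} (hr : r ≠ []) :
    (q ++ r).getLast? = r.getLast? := by
  rw [List.getLast?_append, Option.or_of_isSome (List.getLast?_isSome.mpr hr)]

lemma recompose {α β : ℕ} {a b c : Bool} {j m : ℕ} {q r : List Bool}
    (hα : 0 < α) (hβ : 0 < β) (hj : 1 ≤ j) (hm : 1 ≤ m)
    (hq : q ∈ Fset α β a c j) (hr : r ∈ Gset α β (!c) b m) :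
    q ++ r ∈ Gset α β a b (j + m) := by
  obtain ⟨⟨hq1, hq2⟩, hqbf, hqf, hql⟩ := hq
  obtain ⟨⟨hr1, hr2⟩, hrf, hrl⟩ := hr
  have hqne : q ≠ [] := by
    intro h; subst h
    simp at hq1
    rcases hq1 with h | h <;> omega
  have hrne : r ≠ [] := by
    intro h; subst h
    simp at hr1
    rcases hr1 with h | h <;> omega
  refine ⟨⟨?_, ?_⟩, ?_, ?_⟩
  · rw [List.count_append, hq1, hr1]; ring
  · rw [List.count_append, hq2, hr2]; ring
  · unfold FirstStep at hqf ⊢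
    rw [List.head?_append, hqf]; rfl
  · unfold LastStep at hrl ⊢
    rw [getLast?_append_right' hrne, hrl]

lemma decompose {α β : ℕ} (hα : 0 < α) (hβ : 0 < β) (hcop : Nat.Coprime α β)
    {a b : Bool} {n : ℕ} {p : LatticePath}
    (hp : p ∈ Gset α β a b n) (hbp : ∃ i, IsBounce α β p i) :
    ∃ j c, 1 ≤ j ∧ j < n ∧ p.take ((α + β) * j) ∈ Fset α β a c j ∧
      p.drop ((α + β) * j) ∈ Gset α β (!c) b (n - j) ∧
      (∀ i, i < (α + β) * j - 1 → ¬ IsBounce α β p i) ∧ IsBounce α β p ((α + β) * j - 1) := by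
  classical
  obtain ⟨⟨hp1, hp2⟩, hpf, hpl⟩ := hp
  haveI hdec : DecidablePred (IsBounce α β p) := fun _ => Classical.dec _
  set i₀ := Nat.find hbp with hi₀def
  have hi₀ : IsBounce α β p i₀ := Nat.find_spec hbp
  have hmin : ∀ i, IsBounce α β p i → i₀ ≤ i := fun i h => Nat.find_min' hbp h
  -- extract data of the bounce at i₀
  have hstep : ∃ c : Bool, p[i₀]? = some c ∧ p[i₀+1]? = some (!c) ∧
      α * ((p.take (i₀+1)).count false) = β * ((p.take (i₀+1)).count true) := by
    rcases hi₀ with hb | hb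
    · exact ⟨true, hb.1, by simpa using hb.2.1, hb.2.2⟩
    · exact ⟨false, hb.1, by simpa using hb.2.1, hb.2.2⟩
  obtain ⟨c, hc1, hc2, hline⟩ := hstep
  obtain ⟨hi₁lt, -⟩ := List.getElem?_eq_some_iff.mp hc2
  obtain ⟨j, hj1, hj2⟩ := bounce_point_coprime hα hcop hline
  have hlentake : (p.take (i₀+1)).length = i₀ + 1 := by
    rw [List.length_take]; omega
  have hcnt := List.count_true_add_count_false (p.take (i₀+1))
  have hi₀eq : i₀ + 1 = (α + β) * j := by
    rw [hlentake] at hcnt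
    have : (α + β) * j = α * j + β * j := by ring
    omega
  have hjpos : 1 ≤ j := by
    rcases Nat.eq_zero_or_pos j with h | h
    · exfalso; rw [h, Nat.mul_zero] at hi₀eq; omega
    · exact h
  set q := p.take ((α + β) * j) with hqdef
  set r := p.drop ((α + β) * j) with hrdef
  have hpqr : q ++ r = p := List.take_append_drop _ p
  have hq1 : q.count true = α * j := by rw [hqdef, ← hi₀eq]; exact hj1 ▸ rfl
  have hq2 : q.count false = β * j := by rw [hqdef, ← hi₀eq]; exact hj2 ▸ rfl
  have hqlen : q.length = (α + β) * j := by
    rw [hqdef, List.length_take]; omega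
  have hqne : q ≠ [] := by
    intro h
    rw [h] at hqlen
    simp at hqlen
    omega
  -- j ≤ n
  have hjn : j ≤ n := by
    have hcle : q.count true ≤ p.count true := by
      conv_rhs => rw [← hpqr]
      rw [List.count_append]; omega
    rw [hq1, hp1] at hcle
    exact Nat.le_of_mul_le_mul_left hcle hα
  have hmulsub : ∀ x : ℕ, x * n - x * j = x * (n - j) := fun x => by
    rw [← Nat.mul_sub]
  have hr1 : r.count true = α * (n - j) := by
    have : q.count true + r.count true = p.count true := by
      conv_rhs => rw [← hpqr]; rw [List.count_append]
    rw [hq1, hp1] at this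
    rw [← hmulsub]
    omega
  have hr2 : r.count false = β * (n - j) := by
    have : q.count false + r.count false = p.count false := by
      conv_rhs => rw [← hpqr]; rw [List.count_append]
    rw [hq2, hp2] at this
    rw [← hmulsub]
    omega
  have hrh : r.head? = some (!c) := by
    rw [hrdef, List.head?_drop, ← hi₀eq]
    exact hc2
  have hrne : r ≠ [] := by intro h; rw [h] at hrh; simp at hrh
  -- q's last step
  have hqlast : q.getLast? = some c := by
    rw [List.getLast?_eq_getElem?, hqlen, ← hi₀eq]
    simp only [Nat.add_sub_cancel]
    rw [hqdef, ← hi₀eq, List.getElem?_take_of_lt (by omega)]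
    exact hc1
  -- q is bounce-free
  have hqbf : BounceFree α β q := by
    rw [bounceFree_iff]
    intro i hb
    have hi1 : i + 1 < q.length := by
      rcases hb with hb | hb <;>
      · obtain ⟨h, -⟩ := List.getElem?_eq_some_iff.mp hb.2.1
        omega
    have : IsBounce α β p i := by
      rw [← hpqr, isBounce_append_low hi1]
      exact hb
    have h2 := hmin i this
    rw [hqlen] at hi1
    omega
  have hjltn : j < n := by
    rcases Nat.lt_or_ge j n with h | h
    · exact h
    · exfalso
      have : n - j = 0 := by omega
      rw [this, Nat.mul_zero] at hr1 hr2
      have : r.length = 0 := by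
        have := List.count_true_add_count_false r
        omega
      exact hrne (List.length_eq_zero_iff.mp this)
  have hfq : FirstStep q a := by
    unfold FirstStep
    rw [hqdef, head?_take (by omega)]
    exact hpf
  have hlr : LastStep r b := by
    unfold LastStep at hpl ⊢
    rw [← hpqr, getLast?_append_right' hrne] at hpl
    exact hpl
  have hnb : ∀ i, i < (α + β) * j - 1 → ¬ IsBounce α β p i := by
    intro i hi
    rw [← hqlen] at hi
    rw [← hpqr]
    exact (firstBounce_of hq1 hq2 hqbf hqne hqlast hrh).1 i hi
  have hib : IsBounce α β p ((α + β) * j - 1) := by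
    rw [← hpqr, ← hqlen]
    exact (firstBounce_of hq1 hq2 hqbf hqne hqlast hrh).2
  exact ⟨j, c, hjpos, hjltn, ⟨⟨hq1, hq2⟩, hqbf, hfq, hqlast⟩, ⟨⟨hr1, hr2⟩, hrh, hlr⟩, hnb, hib⟩

lemma ncard_biUnion' {ι X : Type*} (s : Finset ι) (f : ι → Set X)
    (hf : ∀ i ∈ s, (f i).Finite)
    (hd : ∀ i ∈ s, ∀ j ∈ s, i ≠ j → Disjoint (f i) (f j)) :
    (⋃ i ∈ s, f i).ncard = ∑ i ∈ s, (f i).ncard := by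
  classical
  induction s using Finset.induction with
  | empty => simp
  | @insert x s hx ih =>
    rw [Finset.sum_insert hx, Finset.set_biUnion_insert x s f]
    have hdisj : Disjoint (f x) (⋃ i ∈ s, f i) := by
      simp only [Set.disjoint_iUnion_right]
      intro i hi
      exact hd x (Finset.mem_insert_self x s) i (Finset.mem_insert_of_mem hi)
        (fun h => hx (h ▸ hi))
    rw [Set.ncard_union_eq hdisj (hf x (Finset.mem_insert_self x s))
      (Set.Finite.biUnion s.finite_toSet (fun i hi => hf i (Finset.mem_insert_of_mem hi))),
      ih (fun i hi => hf i (Finset.mem_insert_of_mem hi))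
        (fun i hi j hj hij => hd i (Finset.mem_insert_of_mem hi) j (Finset.mem_insert_of_mem hj) hij)]

lemma ncard_prod' {X Y : Type*} (s : Set X) (t : Set Y) :
    (s ×ˢ t).ncard = s.ncard * t.ncard := by
  rw [← Nat.card_coe_set_eq, ← Nat.card_coe_set_eq, ← Nat.card_coe_set_eq, ← Nat.card_prod]
  exact Nat.card_congr (Equiv.Set.prod s t)

def Piece (α β : ℕ) (a b : Bool) (n : ℕ) (jc : ℕ × Bool) : Set LatticePath :=
  (fun x : List Bool × List Bool => x.1 ++ x.2) ''
    ((Fset α β a jc.2 jc.1) ×ˢ (Gset α β (!jc.2) b (n - jc.1)))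

lemma Fset_nonnil {α β : ℕ} {a c : Bool} {j : ℕ} {q : List Bool}
    (hj : 1 ≤ j) (hαβ : 1 ≤ α + β) (hq : q ∈ Fset α β a c j) : q ≠ [] := by
  have hlen := length_of_InL hq.1
  intro h
  rw [h] at hlen
  simp at hlen
  have : 1 * 1 ≤ (α + β) * j := Nat.mul_le_mul hαβ hj
  omega

lemma Gset_nonnil {α β : ℕ} {a c : Bool} {j : ℕ} {q : List Bool}
    (hj : 1 ≤ j) (hαβ : 1 ≤ α + β) (hq : q ∈ Gset α β a c j) : q ≠ [] := by
  have hlen := length_of_InL hq.1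
  intro h
  rw [h] at hlen
  simp at hlen
  have : 1 * 1 ≤ (α + β) * j := Nat.mul_le_mul hαβ hj
  omega

lemma piece_data {α β : ℕ} {a b c : Bool} {j m : ℕ} {q r : List Bool}
    (hα : 0 < α) (hβ : 0 < β) (hj : 1 ≤ j) (hm : 1 ≤ m)
    (hq : q ∈ Fset α β a c j) (hr : r ∈ Gset α β (!c) b m) :
    (∀ i, i < (α + β) * j - 1 → ¬ IsBounce α β (q ++ r) i) ∧
      IsBounce α β (q ++ r) ((α + β) * j - 1) ∧
      (q ++ r).take ((α + β) * j) = q ∧ (q ++ r).drop ((α + β) * j) = r ∧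
      (q ++ r)[(α + β) * j - 1]? = some c := by
  have hαβ : 1 ≤ α + β := by omega
  obtain ⟨hqin, hqbf, hqf, hql⟩ := hq
  have hqlen : q.length = (α + β) * j := length_of_InL hqin
  have hqne : q ≠ [] := by
    intro h; rw [h] at hqlen; simp at hqlen
    have : 1 * 1 ≤ (α + β) * j := Nat.mul_le_mul hαβ hj
    omega
  have hrne : r ≠ [] := Gset_nonnil hm hαβ hr
  have hrh : r.head? = some (!c) := hr.2.1
  have hfb := firstBounce_of hqin.1 hqin.2 hqbf hqne hql hrh
  have e1 : (q ++ r).take ((α + β) * j) = q := by rw [← hqlen, List.take_left]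
  have e2 : (q ++ r).drop ((α + β) * j) = r := by rw [← hqlen, List.drop_left]
  have e3 : (q ++ r)[(α + β) * j - 1]? = some c := by
    rw [← hqlen, List.getElem?_append,
      if_pos (by have := List.length_pos_iff.mpr hqne; omega), ← List.getLast?_eq_getElem?, hql]
  rw [hqlen] at hfb
  exact ⟨hfb.1, hfb.2, e1, e2, e3⟩

lemma piece_disjoint {α β : ℕ} {a b : Bool} {n : ℕ}
    (hα : 0 < α) (hβ : 0 < β) {jc jc' : ℕ × Bool}
    (h1 : jc ∈ Finset.Ico 1 n ×ˢ (Finset.univ : Finset Bool))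
    (h2 : jc' ∈ Finset.Ico 1 n ×ˢ (Finset.univ : Finset Bool))
    (hne : jc ≠ jc') :
    Disjoint (Piece α β a b n jc) (Piece α β a b n jc') := by
  obtain ⟨j, c⟩ := jc
  obtain ⟨j', c'⟩ := jc'
  simp only [Finset.mem_product, Finset.mem_Ico] at h1 h2
  rw [Set.disjoint_left]
  rintro p ⟨⟨q, r⟩, ⟨hq, hr⟩, rfl⟩ ⟨⟨q', r'⟩, ⟨hq', hr'⟩, happ⟩
  have happ' : q' ++ r' = q ++ r := happ
  have hd₀ := piece_data hα hβ (by omega : 1 ≤ j) (by omega : 1 ≤ n - j) hq hr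
  have hd₀' := piece_data hα hβ (by omega : 1 ≤ j') (by omega : 1 ≤ n - j') hq' hr'
  have hd : (∀ i, i < (α + β) * j - 1 → ¬ IsBounce α β (q ++ r) i) ∧
      IsBounce α β (q ++ r) ((α + β) * j - 1) ∧
      (q ++ r).take ((α + β) * j) = q ∧ (q ++ r).drop ((α + β) * j) = r ∧
      (q ++ r)[(α + β) * j - 1]? = some c := hd₀
  have hd' : (∀ i, i < (α + β) * j' - 1 → ¬ IsBounce α β (q' ++ r') i) ∧
      IsBounce α β (q' ++ r') ((α + β) * j' - 1) ∧
      (q' ++ r').take ((α + β) * j') = q' ∧ (q' ++ r').drop ((α + β) * j') = r' ∧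
      (q' ++ r')[(α + β) * j' - 1]? = some c' := hd₀'
  rw [happ'] at hd'
  -- first bounce indices coincide
  have hLL : (α + β) * j - 1 = (α + β) * j' - 1 := by
    rcases Nat.lt_trichotomy ((α + β) * j - 1) ((α + β) * j' - 1) with h | h | h
    · exact absurd hd.2.1 (hd'.1 _ h)
    · exact h
    · exact absurd hd'.2.1 (hd.1 _ h)
  have hjj : j = j' := by
    have g1 : 1 * 1 ≤ (α + β) * j := Nat.mul_le_mul (by omega) (by omega)
    have g2 : 1 * 1 ≤ (α + β) * j' := Nat.mul_le_mul (by omega) (by omega)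
    have : (α + β) * j = (α + β) * j' := by omega
    exact Nat.eq_of_mul_eq_mul_left (by omega) this
  subst hjj
  have hcc : c = c' := by
    have e1 := hd.2.2.2.2
    have e2 := hd'.2.2.2.2
    rw [e1] at e2
    exact (Option.some_injective _ e2).symm ▸ rfl
  subst hcc
  exact hne rfl

lemma piece_disjoint_Fset {α β : ℕ} {a b : Bool} {n : ℕ}
    (hα : 0 < α) (hβ : 0 < β) {jc : ℕ × Bool}
    (h1 : jc ∈ Finset.Ico 1 n ×ˢ (Finset.univ : Finset Bool)) :
    Disjoint (Fset α β a b n) (Piece α β a b n jc) := by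
  obtain ⟨j, c⟩ := jc
  simp only [Finset.mem_product, Finset.mem_Ico] at h1
  rw [Set.disjoint_left]
  rintro p hpF ⟨⟨q, r⟩, ⟨hq, hr⟩, rfl⟩
  have hd := piece_data hα hβ (by omega : 1 ≤ j) (by omega : 1 ≤ n - j) hq hr
  exact (bounceFree_iff α β _).mp hpF.2.1 _ hd.2.1

lemma piece_finite (α β : ℕ) (a b : Bool) (n : ℕ) (jc : ℕ × Bool) :
    (Piece α β a b n jc).Finite :=
  (((Fset_finite _ _ _ _ _).prod (Gset_finite _ _ _ _ _)).image _)

lemma piece_injOn {α β : ℕ} {a b c : Bool} {j m : ℕ}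
    (hα : 0 < α) (hβ : 0 < β) (hj : 1 ≤ j) (hm : 1 ≤ m) :
    Set.InjOn (fun x : List Bool × List Bool => x.1 ++ x.2)
      ((Fset α β a c j) ×ˢ (Gset α β (!c) b m)) := by
  rintro ⟨q, r⟩ ⟨hq, hr⟩ ⟨q', r'⟩ ⟨hq', hr'⟩ h
  have h' : q ++ r = q' ++ r' := h
  have t1 : (q ++ r).take ((α + β) * j) = q := (piece_data hα hβ hj hm hq hr).2.2.1
  have t2 : (q' ++ r').take ((α + β) * j) = q' := (piece_data hα hβ hj hm hq' hr').2.2.1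
  have u1 : (q ++ r).drop ((α + β) * j) = r := (piece_data hα hβ hj hm hq hr).2.2.2.1
  have u2 : (q' ++ r').drop ((α + β) * j) = r' := (piece_data hα hβ hj hm hq' hr').2.2.2.1
  have e1 : q = q' := by rw [← t1, ← t2, h']
  have e2 : r = r' := by rw [← u1, ← u2, h']
  simp [e1, e2]

lemma Gset_eq_union {α β : ℕ} (hα : 0 < α) (hβ : 0 < β) (hcop : Nat.Coprime α β)
    (a b : Bool) {n : ℕ} (hn : 1 ≤ n) :
    Gset α β a b n = Fset α β a b n ∪
      ⋃ jc ∈ (Finset.Ico 1 n ×ˢ (Finset.univ : Finset Bool)), Piece α β a b n jc := by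
  ext p
  constructor
  · intro hp
    by_cases hbp : ∃ i, IsBounce α β p i
    · right
      obtain ⟨j, c, hj1, hj2, hqF, hrG, -, -⟩ := decompose hα hβ hcop hp hbp
      refine Set.mem_iUnion₂.mpr ⟨(j, c), ?_, ?_⟩
      · simp only [Finset.mem_product, Finset.mem_Ico, Finset.mem_univ, and_true]
        omega
      · exact ⟨(p.take ((α + β) * j), p.drop ((α + β) * j)), ⟨hqF, hrG⟩,
          List.take_append_drop _ p⟩
    · left
      push_neg at hbp
      exact ⟨hp.1, (bounceFree_iff α β p).mpr hbp, hp.2.1, hp.2.2⟩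
  · rintro (hp | hp)
    · exact Fset_sub_Gset α β a b n hp
    · obtain ⟨jc, hjc, hq⟩ := Set.mem_iUnion₂.mp hp
      obtain ⟨j, c⟩ := jc
      obtain ⟨⟨q, r⟩, ⟨hqF, hrG⟩, rfl⟩ := hq
      simp only [Finset.mem_product, Finset.mem_Ico] at hjc
      have := recompose hα hβ (by omega : 1 ≤ j) (by omega : 1 ≤ n - j) hqF hrG
      rwa [show j + (n - j) = n by omega] at this

lemma card_identity {α β : ℕ} (hα : 0 < α) (hβ : 0 < β) (hcop : Nat.Coprime α β)
    (a b : Bool) {n : ℕ} (hn : 1 ≤ n) :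
    (Gset α β a b n).ncard = (Fset α β a b n).ncard +
      ∑ jc ∈ (Finset.Ico 1 n ×ˢ (Finset.univ : Finset Bool)),
        (Fset α β a jc.2 jc.1).ncard * (Gset α β (!jc.2) b (n - jc.1)).ncard := by
  rw [Gset_eq_union hα hβ hcop a b hn]
  have hUfin : (⋃ jc ∈ (Finset.Ico 1 n ×ˢ (Finset.univ : Finset Bool)),
      Piece α β a b n jc).Finite :=
    Set.Finite.biUnion (Finset.Ico 1 n ×ˢ (Finset.univ : Finset Bool)).finite_toSet
      (fun jc _ => piece_finite α β a b n jc)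
  have hdisj : Disjoint (Fset α β a b n)
      (⋃ jc ∈ (Finset.Ico 1 n ×ˢ (Finset.univ : Finset Bool)), Piece α β a b n jc) := by
    simp only [Set.disjoint_iUnion_right]
    intro jc hjc
    exact piece_disjoint_Fset hα hβ hjc
  rw [Set.ncard_union_eq hdisj (Fset_finite _ _ _ _ _) hUfin,
    ncard_biUnion' _ _ (fun jc _ => piece_finite α β a b n jc)
      (fun i hi j hj hij => piece_disjoint hα hβ hi hj hij)]
  congr 1
  refine Finset.sum_congr rfl (fun jc hjc => ?_)
  obtain ⟨j, c⟩ := jc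
  simp only [Finset.mem_product, Finset.mem_Ico] at hjc
  rw [Piece, Set.ncard_image_of_injOn
    (piece_injOn hα hβ (by omega : 1 ≤ j) (by omega : 1 ≤ n - j)), ncard_prod']

lemma coeff_gfOf (S : ℕ → Set LatticePath) (k : ℕ) :
    PowerSeries.coeff k (gfOf S) = if k = 0 then 0 else ((S k).ncard : ℚ) :=
  PowerSeries.coeff_mk k _

lemma coeff_gfOf_zero (S : ℕ → Set LatticePath) :
    PowerSeries.coeff 0 (gfOf S) = 0 := by rw [coeff_gfOf]; simp

lemma coeff_mul_gfOf (S T : ℕ → Set LatticePath) {n : ℕ} (hn : 1 ≤ n) :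
    PowerSeries.coeff n (gfOf S * gfOf T) =
      ∑ j ∈ Finset.Ico 1 n, ((S j).ncard : ℚ) * ((T (n - j)).ncard : ℚ) := by
  rw [PowerSeries.coeff_mul, Finset.Nat.sum_antidiagonal_eq_sum_range_succ_mk]
  have hr : Finset.range (n + 1) = insert 0 (insert n (Finset.Ico 1 n)) := by
    ext x
    simp only [Finset.mem_range, Finset.mem_insert, Finset.mem_Ico]
    omega
  rw [hr, Finset.sum_insert (by simp; omega), Finset.sum_insert (by simp)]
  rw [coeff_gfOf_zero, Nat.sub_self, coeff_gfOf_zero]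
  rw [zero_mul, mul_zero, zero_add, zero_add]
  refine Finset.sum_congr rfl (fun j hj => ?_)
  simp only [Finset.mem_Ico] at hj
  rw [coeff_gfOf, coeff_gfOf, if_neg (by omega), if_neg (by omega)]

lemma coeff_mul_gfOf_zero (S T : ℕ → Set LatticePath) :
    PowerSeries.coeff 0 (gfOf S * gfOf T) = 0 := by
  rw [PowerSeries.coeff_mul]
  rw [Finset.Nat.antidiagonal_zero, Finset.sum_singleton, coeff_gfOf_zero, zero_mul]

lemma master_eq {α β : ℕ} (hα : 0 < α) (hβ : 0 < β) (hcop : Nat.Coprime α β) (a b : Bool) :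
    gfOf (Gset α β a b) = gfOf (Fset α β a b)
      + gfOf (Fset α β a true) * gfOf (Gset α β false b)
      + gfOf (Fset α β a false) * gfOf (Gset α β true b) := by
  ext n
  rw [map_add, map_add]
  rcases Nat.eq_zero_or_pos n with rfl | hn
  · rw [coeff_gfOf_zero, coeff_gfOf_zero, coeff_mul_gfOf_zero, coeff_mul_gfOf_zero]
    ring
  · rw [coeff_gfOf, coeff_gfOf, if_neg (by omega), if_neg (by omega),
      coeff_mul_gfOf _ _ hn, coeff_mul_gfOf _ _ hn,
      card_identity hα hβ hcop a b hn]
    push_cast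
    rw [Finset.sum_product]
    have : ∀ j ∈ Finset.Ico 1 n,
        (∑ c : Bool, ((Fset α β a c j).ncard : ℚ) * ((Gset α β (!c) b (n - j)).ncard : ℚ))
        = ((Fset α β a true j).ncard : ℚ) * ((Gset α β false b (n - j)).ncard : ℚ)
          + ((Fset α β a false j).ncard : ℚ) * ((Gset α β true b (n - j)).ncard : ℚ) := by
      intro j _
      rw [Fintype.sum_bool]
      simp
    rw [Finset.sum_congr rfl this, Finset.sum_add_distrib]
    ring

section ident
variable {α β : ℕ}

lemma hposA {k : ℕ} (hk : k ≠ 0) (hα : 0 < α) : 1 ≤ α * k := by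
  have h := Nat.mul_le_mul hα (Nat.one_le_iff_ne_zero.mpr hk)
  simpa using h

lemma gfOf_Gset_ee (hα : 0 < α) (hβ : 0 < β) : gfOf (Gset α β true true) = geeSer α β := by
  ext k
  rw [coeff_gfOf, geeSer, PowerSeries.coeff_mk]
  rcases eq_or_ne k 0 with rfl | hk
  · simp
  · rw [if_neg hk, if_neg hk, ncard_Gset_EE α β k (hposA hk hα) (hposA hk hβ)]

lemma gfOf_Gset_en (hα : 0 < α) (hβ : 0 < β) : gfOf (Gset α β true false) = genSer α β := by
  ext k
  rw [coeff_gfOf, genSer, PowerSeries.coeff_mk]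
  rcases eq_or_ne k 0 with rfl | hk
  · simp
  · rw [if_neg hk, if_neg hk, ncard_Gset_EN α β k (hposA hk hα) (hposA hk hβ)]

lemma gfOf_Gset_ne (hα : 0 < α) (hβ : 0 < β) : gfOf (Gset α β false true) = genSer α β := by
  ext k
  rw [coeff_gfOf, genSer, PowerSeries.coeff_mk]
  rcases eq_or_ne k 0 with rfl | hk
  · simp
  · rw [if_neg hk, if_neg hk, ncard_Gset_NE α β k (hposA hk hα) (hposA hk hβ)]

lemma gfOf_Gset_nn (hα : 0 < α) (hβ : 0 < β) : gfOf (Gset α β false false) = gnnSer α β := by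
  ext k
  rw [coeff_gfOf, gnnSer, PowerSeries.coeff_mk]
  rcases eq_or_ne k 0 with rfl | hk
  · simp
  · rw [if_neg hk, if_neg hk, ncard_Gset_NN α β k (hposA hk hα) (hposA hk hβ)]

end ident

/-- The bounce-free generating functions satisfy
`f_ee·((1+g_en)² − g_ee·g_nn) = g_ee`, `f_nn·((1+g_en)² − g_ee·g_nn) = g_nn`, and
`(1 − f_en)·((1+g_en)² − g_ee·g_nn) = 1 + g_en`. -/
theorem statement3 (α β : ℕ) (hα : 0 < α) (hβ : 0 < β) (hcop : Nat.Coprime α β) :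
    feeSer α β * ((1 + genSer α β) ^ 2 - geeSer α β * gnnSer α β) = geeSer α β ∧
    fnnSer α β * ((1 + genSer α β) ^ 2 - geeSer α β * gnnSer α β) = gnnSer α β ∧
    (1 - fenSer α β) * ((1 + genSer α β) ^ 2 - geeSer α β * gnnSer α β)
      = 1 + genSer α β := by
  have hfee : feeSer α β = gfOf (Fset α β true true) := rfl
  have hfen : fenSer α β = gfOf (Fset α β true false) := rfl
  have hfnn : fnnSer α β = gfOf (Fset α β false false) := rfl
  have hEE := master_eq hα hβ hcop true true
  have hEN := master_eq hα hβ hcop true false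
  have hNE := master_eq hα hβ hcop false true
  have hNN := master_eq hα hβ hcop false false
  rw [gfOf_Gset_ee hα hβ, gfOf_Gset_ne hα hβ, ← hfee, ← hfen] at hEE
  rw [gfOf_Gset_en hα hβ, gfOf_Gset_nn hα hβ, ← hfee, ← hfen] at hEN
  rw [gfOf_Gset_ne hα hβ, gfOf_Gset_ee hα hβ, ← hfnn] at hNE
  rw [gfOf_Gset_nn hα hβ, gfOf_Gset_en hα hβ, ← hfnn] at hNN
  refine ⟨?_, ?_, ?_⟩
  · linear_combination (-(1 + genSer α β)) * hEE + geeSer α β * hEN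
  · linear_combination (-(1 + genSer α β)) * hNN + gnnSer α β * hNE
  · linear_combination (-(gnnSer α β)) * hEE + (1 + genSer α β) * hEN
end

section
/- The generating function f(x) counting bounce-free paths in L_{β/α}(k) satisfies f(x)·((1+g_en(x))² − g_ee(x)·g_nn(x)) = g(x) + 2·(g_en(x)² − g_ee(x)·g_nn(x)). -/
namespace S4Aux
lemma count_tf (l : List Bool) : l.count true + l.count false = l.length := by
  induction l with
  | nil => simp
  | cons h t ih => cases h <;> simp [List.count_cons] <;> omega

def Pset (a b : ℕ) : Set LatticePath := {p | p.count true = a ∧ p.count false = b}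

lemma Pset_finite (a b : ℕ) : (Pset a b).Finite := by
  apply (List.finite_length_eq Bool (a + b)).subset
  rintro p ⟨h1, h2⟩
  simp only [Set.mem_setOf_eq]
  rw [← count_tf p, h1, h2]

lemma finite_of_counts (s : Set LatticePath) (a b : ℕ)
    (h : ∀ p ∈ s, p.count true = a ∧ p.count false = b) : s.Finite :=
  (Pset_finite a b).subset h

lemma ncard_Pset (a b : ℕ) : (Pset a b).ncard = (a + b).choose a := by
  induction a generalizing b with
  | zero =>
    induction b with
    | zero =>
      have : Pset 0 0 = {([] : List Bool)} := by
        ext p; constructor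
        · rintro ⟨h1, h2⟩
          have := count_tf p; rw [h1, h2] at this
          simpa using List.length_eq_zero_iff.mp this.symm
        · rintro rfl; exact ⟨rfl, rfl⟩
      simp [this]
    | succ b ihb =>
      have : Pset 0 (b+1) = (fun q => false :: q) '' Pset 0 b := by
        ext p; constructor
        · rintro ⟨h1, h2⟩
          have hne : p ≠ [] := by rintro rfl; simp at h2
          obtain ⟨h, t, rfl⟩ := List.exists_cons_of_ne_nil hne
          cases h
          · refine ⟨t, ⟨?_, ?_⟩, rfl⟩ <;> simp [List.count_cons] at h1 h2 ⊢ <;> omega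
          · simp [List.count_cons] at h1
        · rintro ⟨q, ⟨h1, h2⟩, rfl⟩
          constructor <;> simp [List.count_cons, h1, h2]
      rw [this, Set.ncard_image_of_injective _ (by intro x y h; simpa using h)]
      simp [ihb]
  | succ a iha =>
    induction b with
    | zero =>
      have : Pset (a+1) 0 = (fun q => true :: q) '' Pset a 0 := by
        ext p; constructor
        · rintro ⟨h1, h2⟩
          have hne : p ≠ [] := by rintro rfl; simp at h1
          obtain ⟨h, t, rfl⟩ := List.exists_cons_of_ne_nil hne
          cases h
          · simp [List.count_cons] at h2
          · refine ⟨t, ⟨?_, ?_⟩, rfl⟩ <;> simp [List.count_cons] at h1 h2 ⊢ <;> omega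
        · rintro ⟨q, ⟨h1, h2⟩, rfl⟩
          constructor <;> simp [List.count_cons, h1, h2]
      rw [this, Set.ncard_image_of_injective _ (by intro x y h; simpa using h)]
      simp [iha]
    | succ b ihb =>
      have hsplit : Pset (a+1) (b+1)
          = (fun q => true :: q) '' Pset a (b+1) ∪ (fun q => false :: q) '' Pset (a+1) b := by
        ext p; constructor
        · rintro ⟨h1, h2⟩
          have hne : p ≠ [] := by rintro rfl; simp at h1
          obtain ⟨h, t, rfl⟩ := List.exists_cons_of_ne_nil hne
          cases h
          · exact Or.inr ⟨t, ⟨by simp [List.count_cons] at h1 ⊢; omega,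
              by simp [List.count_cons] at h2 ⊢; omega⟩, rfl⟩
          · exact Or.inl ⟨t, ⟨by simp [List.count_cons] at h1 ⊢; omega,
              by simp [List.count_cons] at h2 ⊢; omega⟩, rfl⟩
        · rintro (⟨q, ⟨h1, h2⟩, rfl⟩ | ⟨q, ⟨h1, h2⟩, rfl⟩) <;>
            constructor <;> simp [List.count_cons, h1, h2]
      rw [hsplit, Set.ncard_union_eq ?_ ?_ ?_]
      · rw [Set.ncard_image_of_injective _ (by intro x y h; simpa using h),
          Set.ncard_image_of_injective _ (by intro x y h; simpa using h)]
        rw [iha (b+1), ihb]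
        have h1 : a + (b+1) = a + b + 1 := by ring
        have h2 : a + 1 + b = a + b + 1 := by ring
        have h3 : a + 1 + (b + 1) = a + b + 1 + 1 := by ring
        rw [h1, h2, h3, Nat.choose_succ_succ (a+b+1) a]
      · rw [Set.disjoint_left]
        rintro p ⟨q, _, rfl⟩ ⟨q', _, h⟩
        simp at h
      · exact ((Pset_finite a (b+1)).image _)
      · exact ((Pset_finite (a+1) b).image _)


def Qset (s t : Bool) (a b : ℕ) : Set LatticePath :=
  {p | p.count true = a ∧ p.count false = b ∧ p.head? = some s ∧ p.getLast? = some t}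

lemma Qset_eq (s t : Bool) (a b : ℕ) (ha : 1 ≤ a) (hb : 1 ≤ b) :
    Qset s t a b = (fun q => s :: (q ++ [t])) ''
      {q | q.count true + (cond s 1 0) + (cond t 1 0) = a ∧
           q.count false + (cond s 0 1) + (cond t 0 1) = b} := by
  ext p; constructor
  · rintro ⟨h1, h2, h3, h4⟩
    obtain ⟨hd, p₁, rfl⟩ : ∃ hd p₁, p = hd :: p₁ := by
      cases p with
      | nil => simp at h3
      | cons hd p₁ => exact ⟨hd, p₁, rfl⟩
    obtain rfl : hd = s := by simpa using h3
    have hne : p₁ ≠ [] := by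
      rintro rfl
      cases hd <;> simp [List.count_cons] at h1 h2 <;> omega
    have hlast : p₁.getLast? = some t := by
      cases p₁ with
      | nil => exact absurd rfl hne
      | cons a l => rw [List.getLast?_cons_cons] at h4; exact h4
    obtain ⟨q, x, rfl⟩ : ∃ q x, p₁ = q ++ [x] := ⟨p₁.dropLast, p₁.getLast hne,
      (List.dropLast_append_getLast hne).symm⟩
    obtain rfl : x = t := by
      rw [List.getLast?_concat] at hlast; simpa using hlast
    refine ⟨q, ⟨?_, ?_⟩, rfl⟩ <;>
      cases hd <;> cases x <;>
        simp [List.count_cons, List.count_append] at h1 h2 ⊢ <;> omega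
  · rintro ⟨q, ⟨h1, h2⟩, rfl⟩
    refine ⟨?_, ?_, rfl, ?_⟩
    · cases s <;> cases t <;> simp [List.count_cons, List.count_append] at h1 ⊢ <;> omega
    · cases s <;> cases t <;> simp [List.count_cons, List.count_append] at h2 ⊢ <;> omega
    · show (s :: (q ++ [t])).getLast? = some t
      rw [show s :: (q ++ [t]) = (s :: q) ++ [t] by simp, List.getLast?_concat]

lemma consconcat_inj (s t : Bool) : Function.Injective (fun q : LatticePath => s :: (q ++ [t])) := by
  intro x y h
  simp only [List.cons.injEq] at h
  exact List.append_cancel_right h.2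

lemma Qset_finite (s t : Bool) (a b : ℕ) : (Qset s t a b).Finite :=
  finite_of_counts _ a b (fun p hp => ⟨hp.1, hp.2.1⟩)

lemma ncard_Qset_en (a b : ℕ) (ha : 1 ≤ a) (hb : 1 ≤ b) :
    (Qset true false a b).ncard = (a + b - 2).choose (a - 1) := by
  rw [Qset_eq true false a b ha hb, Set.ncard_image_of_injective _ (consconcat_inj _ _)]
  have : {q : LatticePath | q.count true + cond true 1 0 + cond false 1 0 = a ∧
      q.count false + cond true 0 1 + cond false 0 1 = b} = Pset (a-1) (b-1) := by
    ext q; simp only [Set.mem_setOf_eq, Pset, cond]; omega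
  rw [this, ncard_Pset]
  congr 1; omega

lemma ncard_Qset_ne (a b : ℕ) (ha : 1 ≤ a) (hb : 1 ≤ b) :
    (Qset false true a b).ncard = (a + b - 2).choose (a - 1) := by
  rw [Qset_eq false true a b ha hb, Set.ncard_image_of_injective _ (consconcat_inj _ _)]
  have : {q : LatticePath | q.count true + cond false 1 0 + cond true 1 0 = a ∧
      q.count false + cond false 0 1 + cond true 0 1 = b} = Pset (a-1) (b-1) := by
    ext q; simp only [Set.mem_setOf_eq, Pset, cond]; omega
  rw [this, ncard_Pset]
  congr 1; omega

lemma ncard_Qset_ee (a b : ℕ) (ha : 1 ≤ a) (hb : 1 ≤ b) :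
    (Qset true true a b).ncard = (a + b - 2).choose b := by
  rw [Qset_eq true true a b ha hb, Set.ncard_image_of_injective _ (consconcat_inj _ _)]
  rcases Nat.lt_or_ge a 2 with h2 | h2
  · have he : {q : LatticePath | q.count true + cond true 1 0 + cond true 1 0 = a ∧
        q.count false + cond true 0 1 + cond true 0 1 = b} = ∅ := by
      ext q; simp only [Set.mem_setOf_eq, Set.mem_empty_iff_false, iff_false, not_and, cond]; omega
    rw [he]
    have : a + b - 2 < b := by omega
    simp [Nat.choose_eq_zero_of_lt this]
  · have he : {q : LatticePath | q.count true + cond true 1 0 + cond true 1 0 = a ∧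
        q.count false + cond true 0 1 + cond true 0 1 = b} = Pset (a-2) b := by
      ext q; simp only [Set.mem_setOf_eq, Pset, cond]; omega
    rw [he, ncard_Pset]
    rw [show a - 2 + b = a + b - 2 by omega, show a - 2 = (a + b - 2) - b by omega,
      Nat.choose_symm (by omega)]

lemma ncard_Qset_nn (a b : ℕ) (ha : 1 ≤ a) (hb : 1 ≤ b) :
    (Qset false false a b).ncard = (a + b - 2).choose a := by
  rw [Qset_eq false false a b ha hb, Set.ncard_image_of_injective _ (consconcat_inj _ _)]
  rcases Nat.lt_or_ge b 2 with h2 | h2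
  · have he : {q : LatticePath | q.count true + cond false 1 0 + cond false 1 0 = a ∧
        q.count false + cond false 0 1 + cond false 0 1 = b} = ∅ := by
      ext q; simp only [Set.mem_setOf_eq, Set.mem_empty_iff_false, iff_false, not_and, cond]; omega
    rw [he]
    have : a + b - 2 < a := by omega
    simp [Nat.choose_eq_zero_of_lt this]
  · have he : {q : LatticePath | q.count true + cond false 1 0 + cond false 1 0 = a ∧
        q.count false + cond false 0 1 + cond false 0 1 = b} = Pset a (b-2) := by
      ext q; simp only [Set.mem_setOf_eq, Pset, cond]; omega
    rw [he, ncard_Pset]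
    congr 1; omega


/-- `p` has a bounce (of either kind) at index `i`. -/
def Bounce (α β : ℕ) (p : LatticePath) (i : ℕ) : Prop :=
  IsLeftBounce α β p i ∨ IsRightBounce α β p i

lemma bounceFree_iff {α β : ℕ} {p : LatticePath} :
    BounceFree α β p ↔ ∀ i, ¬ Bounce α β p i := by
  constructor
  · rintro ⟨h1, h2⟩ i (h | h); exacts [h1 i h, h2 i h]
  · intro h
    exact ⟨fun i hi => h i (Or.inl hi), fun i hi => h i (Or.inr hi)⟩

lemma bounce_take_iff {α β : ℕ} {p : LatticePath} {m i : ℕ} (h : i + 2 ≤ m) :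
    Bounce α β (p.take m) i ↔ Bounce α β p i := by
  have e1 : (p.take m)[i]? = p[i]? := by rw [List.getElem?_take]; simp [show i < m by omega]
  have e2 : (p.take m)[i+1]? = p[i+1]? := by
    rw [List.getElem?_take]; simp [show i + 1 < m by omega]
  have e3 : (p.take m).take (i+1) = p.take (i+1) := by
    rw [List.take_take]; congr 1; omega
  unfold Bounce IsLeftBounce IsRightBounce
  rw [e1, e2, e3]

lemma bounce_imp_lt {α β : ℕ} {p : LatticePath} {i : ℕ} (h : Bounce α β p i) :
    i + 2 ≤ p.length := by
  have : p[i+1]? = some false ∨ p[i+1]? = some true := by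
    rcases h with ⟨_, h2, _⟩ | ⟨_, h2, _⟩; exacts [Or.inl h2, Or.inr h2]
  rcases this with h2 | h2 <;>
  · obtain ⟨hlt, -⟩ := List.getElem?_eq_some_iff.mp h2
    omega

lemma length_of_counts {p : LatticePath} {a b : ℕ}
    (h1 : p.count true = a) (h2 : p.count false = b) : p.length = a + b := by
  rw [← count_tf p, h1, h2]

/-- Paths in `L_{β/α}(k)` from `s` to `t`. -/
def Gs (α β : ℕ) (s t : Bool) (k : ℕ) : Set LatticePath :=
  {p | InL α β k p ∧ FirstStep p s ∧ LastStep p t}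

/-- Bounce-free paths in `L_{β/α}(k)` from `s` to `t`. -/
def Fs (α β : ℕ) (s t : Bool) (k : ℕ) : Set LatticePath :=
  {p | InL α β k p ∧ BounceFree α β p ∧ FirstStep p s ∧ LastStep p t}

lemma Gs_eq_Qset (α β : ℕ) (s t : Bool) (k : ℕ) : Gs α β s t k = Qset s t (α*k) (β*k) := by
  ext p
  simp only [Gs, Qset, InL, FirstStep, LastStep, Set.mem_setOf_eq]
  tauto

lemma Gs_finite (α β : ℕ) (s t : Bool) (k : ℕ) : (Gs α β s t k).Finite := by
  rw [Gs_eq_Qset]; exact Qset_finite _ _ _ _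

lemma Fs_finite (α β : ℕ) (s t : Bool) (k : ℕ) : (Fs α β s t k).Finite :=
  finite_of_counts _ (α*k) (β*k) (fun p hp => hp.1)

/-- The cut set: paths in `L(k)` whose initial segment of length `(α+β)j` is a
bounce-free path to `(αj,βj)` ending in `u`, with the remainder starting with `!u`. -/
def Cut (α β : ℕ) (s t : Bool) (k j : ℕ) (u : Bool) : Set LatticePath :=
  {p | p.take ((α+β)*j) ∈ Fs α β s u j ∧ p.drop ((α+β)*j) ∈ Gs α β (!u) t (k-j)}

section CutFacts

variable {α β : ℕ} {s t : Bool} {k j : ℕ} {u : Bool}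

lemma cut_facts (hα : 0 < α) (hβ : 0 < β) (hj : 1 ≤ j) (hjk : j < k) {p : LatticePath}
    (hp : p ∈ Cut α β s t k j u) :
    (α+β)*j ≤ p.length ∧ (α+β)*j < p.length ∧
      p[(α+β)*j - 1]? = some u ∧ p[(α+β)*j]? = some (!u) ∧
      Bounce α β p ((α+β)*j - 1) := by
  obtain ⟨hA, hB⟩ := hp
  set m := (α+β)*j with hm
  have hm1 : 1 ≤ m := by
    rw [hm]; exact Nat.mul_pos (by omega) hj
  have hAlen : (p.take m).length = m := by
    rw [length_of_counts hA.1.1 hA.1.2]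
    ring
  have hmle : m ≤ p.length := by
    have : (p.take m).length = min m p.length := List.length_take
    omega
  have hBlen : (p.drop m).length = (α+β)*(k-j) := by
    rw [length_of_counts hB.1.1 hB.1.2]
    ring
  have hmlt : m < p.length := by
    have h1 : (p.drop m).length = p.length - m := List.length_drop
    have h2 : 1 ≤ (α+β)*(k-j) := Nat.mul_pos (by omega) (by omega)
    omega
  have hlast : p[m - 1]? = some u := by
    have h1 : (p.take m).getLast? = some u := hA.2.2.2
    rw [List.getLast?_eq_getElem?, hAlen] at h1
    rwa [List.getElem?_take, if_pos (by omega)] at h1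
  have hhead : p[m]? = some (!u) := by
    have h1 : (p.drop m).head? = some (!u) := hB.2.1
    have h2 : (p.drop m).head? = (p.drop m)[0]? := by cases hd : p.drop m <;> simp [hd]
    rw [h2, List.getElem?_drop] at h1
    simpa using h1
  have hline : α * ((p.take m).count false) = β * ((p.take m).count true) := by
    rw [hA.1.1, hA.1.2]; ring
  have hbounce : Bounce α β p (m - 1) := by
    have hm' : m - 1 + 1 = m := by omega
    cases u with
    | true =>
      refine Or.inl ⟨hlast, ?_, ?_⟩
      · rw [hm']; simpa using hhead
      · rw [hm']; exact hline
    | false =>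
      refine Or.inr ⟨hlast, ?_, ?_⟩
      · rw [hm']; simpa using hhead
      · rw [hm']; exact hline
  exact ⟨hmle, hmlt, hlast, hhead, hbounce⟩

lemma cut_no_early_bounce {p : LatticePath} (hp : p ∈ Cut α β s t k j u) :
    ∀ i, i + 2 ≤ (α+β)*j → ¬ Bounce α β p i := by
  intro i hi hb
  have := (bounceFree_iff.mp hp.1.2.1) i
  exact this ((bounce_take_iff hi).mpr hb)

end CutFacts


section CutMain

variable {α β : ℕ} {s t : Bool} {k : ℕ}

/-- Every path with a bounce lies in some cut set. -/
lemma exists_cut (hα : 0 < α) (hβ : 0 < β) (hcop : Nat.Coprime α β) (hk : 1 ≤ k)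
    {p : LatticePath} (hp : p ∈ Gs α β s t k) (hbf : ¬ BounceFree α β p) :
    ∃ j u, 1 ≤ j ∧ j < k ∧ p ∈ Cut α β s t k j u := by
  classical
  have hex : ∃ i, Bounce α β p i := by
    by_contra h
    push_neg at h
    exact hbf (bounceFree_iff.mpr h)
  let i0 := Nat.find hex
  have hb : Bounce α β p i0 := Nat.find_spec hex
  have hmin : ∀ i < i0, ¬ Bounce α β p i := fun i hi => Nat.find_min hex hi
  set m := i0 + 1 with hmdef
  have hmlt : m < p.length := by
    have := bounce_imp_lt hb; omega
  have hplen : p.length = (α+β)*k := by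
    rw [length_of_counts hp.1.1 hp.1.2]; ring
  have hline : α * ((p.take m).count false) = β * ((p.take m).count true) := by
    rcases hb with ⟨_, _, h3⟩ | ⟨_, _, h3⟩ <;> exact h3
  have htlen : (p.take m).length = m := by
    rw [List.length_take]; omega
  -- extract j from coprimality
  have hdvd : α ∣ (p.take m).count true := by
    apply hcop.dvd_of_dvd_mul_left
    exact ⟨_, hline.symm⟩
  obtain ⟨j, hj⟩ := hdvd
  have hcf : (p.take m).count false = β * j := by
    rw [hj] at hline
    have : α * ((p.take m).count false) = α * (β * j) := by rw [hline]; ring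
    exact Nat.eq_of_mul_eq_mul_left hα this
  have hmj : m = (α+β)*j := by
    have := count_tf (p.take m)
    rw [hj, hcf, htlen] at this
    rw [← this]; ring
  have hj1 : 1 ≤ j := by
    rcases Nat.eq_zero_or_pos j with rfl | h
    · exfalso; rw [Nat.mul_zero] at hmj; omega
    · exact h
  have hjk : j < k := by
    by_contra h
    push_neg at h
    have : (α+β)*k ≤ (α+β)*j := Nat.mul_le_mul_left _ h
    omega
  -- the step letters
  obtain ⟨u, hu, hu'⟩ : ∃ u, p[i0]? = some u ∧ p[i0+1]? = some (!u) := by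
    rcases hb with ⟨h1, h2, _⟩ | ⟨h1, h2, _⟩
    · exact ⟨true, h1, by simpa using h2⟩
    · exact ⟨false, h1, by simpa using h2⟩
  refine ⟨j, u, hj1, hjk, ?_, ?_⟩
  · -- take m ∈ Fs α β s u j
    rw [← hmj]
    refine ⟨⟨hj, hcf⟩, ?_, ?_, ?_⟩
    · -- bounce free
      rw [bounceFree_iff]
      intro i hi
      have hlt := bounce_imp_lt hi
      rw [htlen] at hlt
      have : Bounce α β p i := (bounce_take_iff hlt).mp hi
      exact hmin i (by omega) this
    · -- first step
      show (p.take m).head? = some s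
      have h0 : (p.take m).head? = (p.take m)[0]? := by
        cases hd : p.take m <;> simp [hd]
      have h1 : p.head? = p[0]? := by cases p <;> simp
      rw [h0, List.getElem?_take, if_pos (by omega), ← h1]
      exact hp.2.1
    · -- last step
      show (p.take m).getLast? = some u
      rw [List.getLast?_eq_getElem?, htlen, List.getElem?_take, if_pos (by omega)]
      simpa [hmdef] using hu
  · -- drop m ∈ Gs α β (!u) t (k - j)
    rw [← hmj]
    have hct : (p.drop m).count true = α * (k - j) := by
      have hsum : (p.take m).count true + (p.drop m).count true = p.count true := by
        rw [← List.count_append, List.take_append_drop]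
      have e : α * k = α * j + α * (k - j) := by
        rw [← Nat.mul_add]; congr 1; omega
      rw [hp.1.1] at hsum
      omega
    have hcf' : (p.drop m).count false = β * (k - j) := by
      have hsum : (p.take m).count false + (p.drop m).count false = p.count false := by
        rw [← List.count_append, List.take_append_drop]
      have e : β * k = β * j + β * (k - j) := by
        rw [← Nat.mul_add]; congr 1; omega
      rw [hp.1.2, hcf] at hsum
      omega
    refine ⟨⟨hct, hcf'⟩, ?_, ?_⟩
    · show (p.drop m).head? = some (!u)
      have h0 : (p.drop m).head? = (p.drop m)[0]? := by
        cases hd : p.drop m <;> simp [hd]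
      rw [h0, List.getElem?_drop]
      simpa [hmdef] using hu'
    · show (p.drop m).getLast? = some t
      have hne : p.drop m ≠ [] := by
        intro h
        have : (p.drop m).length = p.length - m := List.length_drop
        rw [h] at this
        simp at this
        omega
      have : (p.take m ++ p.drop m).getLast? = (p.drop m).getLast? := by
        rw [List.getLast?_append]
        cases hd : p.drop m with
        | nil => exact absurd hd hne
        | cons a l => simp [List.getLast?_eq_getElem?]
      rw [List.take_append_drop] at this
      rw [← this]
      exact hp.2.2

/-- Cut sets are contained in the bouncing part of `Gs`. -/
lemma cut_subset (hα : 0 < α) (hβ : 0 < β) {j : ℕ} {u : Bool} (hj : 1 ≤ j) (hjk : j < k) :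
    Cut α β s t k j u ⊆ {p ∈ Gs α β s t k | ¬ BounceFree α β p} := by
  intro p hp
  obtain ⟨hmle, hmlt, hlast, hhead, hbounce⟩ := cut_facts hα hβ hj hjk hp
  obtain ⟨hA, hB⟩ := hp
  set m := (α+β)*j with hm
  have hsplit : p.take m ++ p.drop m = p := List.take_append_drop m p
  constructor
  · refine ⟨⟨?_, ?_⟩, ?_, ?_⟩
    · have : (p.take m ++ p.drop m).count true = (p.take m).count true + (p.drop m).count true := List.count_append
      rw [hsplit, hA.1.1, hB.1.1] at this
      rw [this, ← Nat.mul_add]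
      congr 1; omega
    · have : (p.take m ++ p.drop m).count false = (p.take m).count false + (p.drop m).count false := List.count_append
      rw [hsplit, hA.1.2, hB.1.2] at this
      rw [this, ← Nat.mul_add]
      congr 1; omega
    · show p.head? = some s
      have h0 : p.head? = p[0]? := by cases p <;> simp
      have h1 : (p.take m).head? = some s := hA.2.2.1
      have h2 : (p.take m).head? = (p.take m)[0]? := by cases hd : p.take m <;> simp [hd]
      rw [h2, List.getElem?_take, if_pos (by
        have : 1 ≤ m := by rw [hm]; exact Nat.mul_pos (by omega) hj
        omega)] at h1
      rw [h0]; exact h1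
    · show p.getLast? = some t
      have hne : p.drop m ≠ [] := by
        intro h
        have : (p.drop m).length = p.length - m := List.length_drop
        rw [h] at this
        simp at this
        omega
      have h1 : (p.take m ++ p.drop m).getLast? = (p.drop m).getLast? := by
        rw [List.getLast?_append]
        cases hd : p.drop m with
        | nil => exact absurd hd hne
        | cons a l => simp [List.getLast?_eq_getElem?]
      rw [hsplit] at h1
      rw [h1]; exact hB.2.2
  · rw [bounceFree_iff]
    push_neg
    exact ⟨_, hbounce⟩

/-- Cut sets for different parameters are disjoint. -/
lemma cut_disjoint (hα : 0 < α) (hβ : 0 < β) {j j' : ℕ} {u u' : Bool}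
    (hj : 1 ≤ j) (hjk : j < k) (hj' : 1 ≤ j') (hjk' : j' < k)
    (hne : (j, u) ≠ (j', u')) :
    Disjoint (Cut α β s t k j u) (Cut α β s t k j' u') := by
  rw [Set.disjoint_left]
  intro p hp hp'
  obtain ⟨hmle, hmlt, hlast, hhead, hbounce⟩ := cut_facts hα hβ hj hjk hp
  obtain ⟨hmle', hmlt', hlast', hhead', hbounce'⟩ := cut_facts hα hβ hj' hjk' hp'
  have hab : 2 ≤ α + β := by omega
  have hjj : j = j' := by
    by_contra hjj
    rcases Nat.lt_or_ge j j' with h | h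
    · -- bounce at (α+β)j - 1 is an early bounce for the j' cut
      refine cut_no_early_bounce hp' ((α+β)*j - 1) ?_ hbounce
      have h1 : (α+β)*j + (α+β) ≤ (α+β)*j' := by
        rw [← Nat.mul_succ]
        exact Nat.mul_le_mul_left _ h
      have h2 : 1 ≤ (α+β)*j := Nat.mul_pos (by omega) hj
      omega
    · have h' : j' < j := by omega
      refine cut_no_early_bounce hp ((α+β)*j' - 1) ?_ hbounce'
      have h1 : (α+β)*j' + (α+β) ≤ (α+β)*j := by
        rw [← Nat.mul_succ]
        exact Nat.mul_le_mul_left _ h'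
      have h2 : 1 ≤ (α+β)*j' := Nat.mul_pos (by omega) hj'
      omega
  subst hjj
  have huu : u = u' := by
    rw [hlast] at hlast'
    exact Option.some_inj.mp hlast'
  exact hne (by rw [huu])

end CutMain


section Cards

variable {α β : ℕ} {s t : Bool} {k : ℕ}

/-- The cut set is in bijection with the product of the two piece sets. -/
lemma ncard_cut (hα : 0 < α) (hβ : 0 < β) {j : ℕ} {u : Bool} (hj : 1 ≤ j) (hjk : j < k) :
    (Cut α β s t k j u).ncard = (Fs α β s u j).ncard * (Gs α β (!u) t (k-j)).ncard := by
  set m := (α + β) * j with hm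
  have himg : (fun p : LatticePath => (p.take m, p.drop m)) '' Cut α β s t k j u
      = (Fs α β s u j) ×ˢ (Gs α β (!u) t (k-j)) := by
    ext q
    constructor
    · rintro ⟨p, ⟨hA, hB⟩, rfl⟩
      exact ⟨hA, hB⟩
    · rintro ⟨hA, hB⟩
      refine ⟨q.1 ++ q.2, ⟨?_, ?_⟩, ?_⟩
      · rwa [← hm, List.take_left' (by rw [length_of_counts hA.1.1 hA.1.2, hm]; ring)]
      · rwa [← hm, List.drop_left' (by rw [length_of_counts hA.1.1 hA.1.2, hm]; ring)]
      · show (List.take m (q.1 ++ q.2), List.drop m (q.1 ++ q.2)) = q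
        rw [List.take_left' (by rw [length_of_counts hA.1.1 hA.1.2, hm]; ring),
          List.drop_left' (by rw [length_of_counts hA.1.1 hA.1.2, hm]; ring)]
  have hinj : Set.InjOn (fun p : LatticePath => (p.take m, p.drop m)) (Cut α β s t k j u) := by
    intro p hp p' hp' h
    simp only [Prod.mk.injEq] at h
    rw [← List.take_append_drop m p, ← List.take_append_drop m p', h.1, h.2]
  calc (Cut α β s t k j u).ncard
      = ((fun p : LatticePath => (p.take m, p.drop m)) '' Cut α β s t k j u).ncard :=
        (Set.ncard_image_of_injOn hinj).symm
    _ = ((Fs α β s u j) ×ˢ (Gs α β (!u) t (k-j))).ncard := by rw [himg]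
    _ = (Fs α β s u j).ncard * (Gs α β (!u) t (k-j)).ncard := by
        rw [← Nat.card_coe_set_eq, ← Nat.card_coe_set_eq, ← Nat.card_coe_set_eq,
          ← Nat.card_prod]
        exact Nat.card_congr (Equiv.Set.prod _ _)

/-- `ncard` of a pairwise-disjoint finite indexed union. -/
lemma ncard_biUnion {ι : Type} [DecidableEq ι] (s : Finset ι) (f : ι → Set LatticePath)
    (hfin : ∀ i ∈ s, (f i).Finite)
    (hdisj : ∀ i ∈ s, ∀ j ∈ s, i ≠ j → Disjoint (f i) (f j)) :
    (⋃ i ∈ s, f i).ncard = ∑ i ∈ s, (f i).ncard := by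
  classical
  revert hfin hdisj
  induction s using Finset.induction_on with
  | empty => intro _ _; simp
  | insert x s' hx ih =>
    intro hfin hdisj
    rw [Finset.sum_insert hx]
    have hU : (⋃ i ∈ insert x s', f i) = f x ∪ ⋃ i ∈ s', f i :=
      Finset.set_biUnion_insert x s' f
    rw [hU, Set.ncard_union_eq ?disj ?f1 ?f2]
    · rw [ih (fun i hi => hfin i (Finset.mem_insert_of_mem hi))
        (fun i hi j hj hij => hdisj i (Finset.mem_insert_of_mem hi) j
          (Finset.mem_insert_of_mem hj) hij)]
    case disj =>
      rw [Set.disjoint_right]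
      rintro p hp hpx
      simp only [Set.mem_iUnion] at hp
      obtain ⟨i, hi, hpi⟩ := hp
      exact (Set.disjoint_left.mp (hdisj x (Finset.mem_insert_self _ _) i
        (Finset.mem_insert_of_mem hi) (by rintro rfl; exact hx hi))) hpx hpi
    case f1 => exact hfin x (Finset.mem_insert_self _ _)
    case f2 =>
      apply Set.Finite.biUnion (Finset.finite_toSet s')
      exact fun i hi => hfin i (Finset.mem_insert_of_mem hi)

/-- Main split: bouncing paths decompose at the first bounce. -/
lemma ncard_Gs_split (hα : 0 < α) (hβ : 0 < β) (hcop : Nat.Coprime α β) (hk : 1 ≤ k) :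
    (Gs α β s t k).ncard = (Fs α β s t k).ncard
      + ∑ j ∈ Finset.Ico 1 k,
          ((Fs α β s true j).ncard * (Gs α β false t (k-j)).ncard
            + (Fs α β s false j).ncard * (Gs α β true t (k-j)).ncard) := by
  classical
  set D := {p ∈ Gs α β s t k | ¬ BounceFree α β p} with hD
  have hGsplit : Gs α β s t k = Fs α β s t k ∪ D := by
    ext p
    constructor
    · intro hp
      by_cases hbf : BounceFree α β p
      · exact Or.inl ⟨hp.1, hbf, hp.2.1, hp.2.2⟩
      · exact Or.inr ⟨hp, hbf⟩
    · rintro (⟨h1, _, h3, h4⟩ | ⟨hp, _⟩)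
      · exact ⟨h1, h3, h4⟩
      · exact hp
  have hDfin : D.Finite := (Gs_finite α β s t k).subset (fun p hp => hp.1)
  have hdisjFD : Disjoint (Fs α β s t k) D := by
    rw [Set.disjoint_left]
    rintro p ⟨_, hbf, _, _⟩ ⟨_, hnbf⟩
    exact hnbf hbf
  have h1 : (Gs α β s t k).ncard = (Fs α β s t k).ncard + D.ncard := by
    rw [hGsplit, Set.ncard_union_eq hdisjFD (Fs_finite α β s t k) hDfin]
  rw [h1]
  congr 1
  -- now D = ⋃ j ∈ Ico 1 k, (Cut j true ∪ Cut j false)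
  have hDU : D = ⋃ j ∈ Finset.Ico 1 k, (Cut α β s t k j true ∪ Cut α β s t k j false) := by
    ext p
    constructor
    · rintro ⟨hp, hbf⟩
      obtain ⟨j, u, hj1, hjk, hcut⟩ := exists_cut hα hβ hcop hk hp hbf
      simp only [Set.mem_iUnion, Finset.mem_coe, Finset.mem_Ico]
      refine ⟨j, ⟨hj1, hjk⟩, ?_⟩
      cases u
      · exact Or.inr hcut
      · exact Or.inl hcut
    · intro hp
      simp only [Set.mem_iUnion, Finset.mem_coe, Finset.mem_Ico] at hp
      obtain ⟨j, ⟨hj1, hjk⟩, hcut⟩ := hp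
      rcases hcut with h | h
      · exact cut_subset hα hβ hj1 hjk h
      · exact cut_subset hα hβ hj1 hjk h
  rw [hDU, ncard_biUnion]
  · apply Finset.sum_congr rfl
    intro j hj
    rw [Finset.mem_Ico] at hj
    have hjk : j < k := hj.2
    have hj1 : 1 ≤ j := hj.1
    rw [Set.ncard_union_eq ?_ ?_ ?_]
    · rw [ncard_cut hα hβ hj1 hjk, ncard_cut hα hβ hj1 hjk]
      simp only [Bool.not_true, Bool.not_false]
    · exact cut_disjoint hα hβ hj1 hjk hj1 hjk (by simp)
    · exact ((Gs_finite α β s t k).subset ((cut_subset hα hβ hj1 hjk).trans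
        (fun p hp => hp.1)))
    · exact ((Gs_finite α β s t k).subset ((cut_subset hα hβ hj1 hjk).trans
        (fun p hp => hp.1)))
  · intro j hj
    rw [Finset.mem_Ico] at hj
    exact ((Gs_finite α β s t k).subset (by
      apply Set.union_subset <;>
        exact (cut_subset hα hβ hj.1 hj.2).trans (fun p hp => hp.1)))
  · intro i hi j hj hij
    rw [Finset.mem_Ico] at hi hj
    apply Set.disjoint_union_left.mpr
    constructor <;> (apply Set.disjoint_union_right.mpr; constructor) <;>
      exact cut_disjoint hα hβ hi.1 hi.2 hj.1 hj.2 (by simp [hij])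

end Cards


section Series

lemma coeff_gfOf (S : ℕ → Set LatticePath) (k : ℕ) :
    PowerSeries.coeff k (gfOf S) = if k = 0 then 0 else ((S k).ncard : ℚ) :=
  PowerSeries.coeff_mk _ _

lemma coeff_gfOf_mul (S T : ℕ → Set LatticePath) (k : ℕ) :
    PowerSeries.coeff k (gfOf S * gfOf T)
      = ∑ j ∈ Finset.Ico 1 k, ((S j).ncard : ℚ) * ((T (k-j)).ncard : ℚ) := by
  rw [PowerSeries.coeff_mul, Finset.Nat.sum_antidiagonal_eq_sum_range_succ_mk]
  rw [← Finset.sum_subset (show Finset.Ico 1 k ⊆ Finset.range (k+1) from by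
    intro x hx; rw [Finset.mem_Ico] at hx; rw [Finset.mem_range]; omega)]
  · apply Finset.sum_congr rfl
    intro j hj
    rw [Finset.mem_Ico] at hj
    rw [coeff_gfOf, coeff_gfOf, if_neg (by omega), if_neg (by omega)]
  · intro x hx hx'
    rw [Finset.mem_range] at hx
    rw [Finset.mem_Ico] at hx'
    rw [coeff_gfOf, coeff_gfOf]
    rcases Nat.eq_zero_or_pos x with rfl | h1
    · rw [if_pos rfl, zero_mul]
    · rw [if_pos (show k - x = 0 from by omega), mul_zero]

/-- Four-way split of a finite set of nonempty paths by first and last step. -/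
lemma ncard_four_split (S : Set LatticePath) (hfin : S.Finite) (hne : ∀ p ∈ S, p ≠ []) :
    S.ncard = {p ∈ S | FirstStep p true ∧ LastStep p true}.ncard
      + {p ∈ S | FirstStep p true ∧ LastStep p false}.ncard
      + {p ∈ S | FirstStep p false ∧ LastStep p true}.ncard
      + {p ∈ S | FirstStep p false ∧ LastStep p false}.ncard := by
  classical
  have hmem : ∀ p ∈ S, ∃ a b, FirstStep p a ∧ LastStep p b := by
    intro p hp
    have h := hne p hp
    refine ⟨p.head h, p.getLast h, ?_, ?_⟩
    · show p.head? = _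
      rw [List.head?_eq_head h]
    · show p.getLast? = _
      rw [List.getLast?_eq_getLast h]
  have hU : S = ({p ∈ S | FirstStep p true ∧ LastStep p true}
      ∪ {p ∈ S | FirstStep p true ∧ LastStep p false})
      ∪ ({p ∈ S | FirstStep p false ∧ LastStep p true}
      ∪ {p ∈ S | FirstStep p false ∧ LastStep p false}) := by
    ext p
    constructor
    · intro hp
      obtain ⟨a, b, ha, hb⟩ := hmem p hp
      cases a <;> cases b
      · exact Or.inr (Or.inr ⟨hp, ha, hb⟩)
      · exact Or.inr (Or.inl ⟨hp, ha, hb⟩)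
      · exact Or.inl (Or.inr ⟨hp, ha, hb⟩)
      · exact Or.inl (Or.inl ⟨hp, ha, hb⟩)
    · rintro ((⟨hp, _⟩ | ⟨hp, _⟩) | (⟨hp, _⟩ | ⟨hp, _⟩)) <;> exact hp
  have hd : ∀ (a b a' b' : Bool), (a, b) ≠ (a', b') →
      Disjoint {p ∈ S | FirstStep p a ∧ LastStep p b} {p ∈ S | FirstStep p a' ∧ LastStep p b'} := by
    intro a b a' b' hne'
    rw [Set.disjoint_left]
    rintro p ⟨_, h1, h2⟩ ⟨_, h1', h2'⟩
    unfold FirstStep at h1 h1'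
    unfold LastStep at h2 h2'
    rw [h1] at h1'
    rw [h2] at h2'
    exact hne' (by rw [Option.some_inj.mp h1', Option.some_inj.mp h2'])
  have hf : ∀ (a b : Bool), {p ∈ S | FirstStep p a ∧ LastStep p b}.Finite :=
    fun a b => hfin.subset (fun p hp => hp.1)
  conv_lhs => rw [hU]
  rw [Set.ncard_union_eq ?_ ((hf _ _).union (hf _ _)) ((hf _ _).union (hf _ _))]
  · rw [Set.ncard_union_eq (hd true true true false (by simp)) (hf _ _) (hf _ _),
      Set.ncard_union_eq (hd false true false false (by simp)) (hf _ _) (hf _ _)]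
    ring
  · apply Set.disjoint_union_left.mpr
    constructor <;> apply Set.disjoint_union_right.mpr <;>
      exact ⟨hd _ _ _ _ (by simp), hd _ _ _ _ (by simp)⟩

variable {α β : ℕ}

lemma InL_ne_nil {k : ℕ} (hα : 0 < α) (hk : 1 ≤ k) {p : LatticePath} (h : InL α β k p) :
    p ≠ [] := by
  intro hnil
  rw [hnil] at h
  have h1 := h.1
  simp only [List.count_nil] at h1
  have h2 : 1 ≤ α * k := Nat.mul_pos hα hk
  omega

lemma sep_Gs (s t : Bool) (k : ℕ) :
    {p ∈ {q | InL α β k q} | FirstStep p s ∧ LastStep p t} = Gs α β s t k := by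
  ext p; simp only [Gs, Set.mem_setOf_eq]

lemma sep_Fs (s t : Bool) (k : ℕ) :
    {p ∈ {q | InL α β k q ∧ BounceFree α β q} | FirstStep p s ∧ LastStep p t}
      = Fs α β s t k := by
  ext p; simp only [Fs, Set.mem_setOf_eq]; tauto

end Series


section Main

variable {α β : ℕ}

lemma Qs_helper (hα : 0 < α) (hβ : 0 < β) (k : ℕ) (hk : k ≠ 0) :
    1 ≤ α * k ∧ 1 ≤ β * k :=
  ⟨Nat.mul_pos hα (by omega), Nat.mul_pos hβ (by omega)⟩

lemma gee_eq (hα : 0 < α) (hβ : 0 < β) :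
    (PowerSeries.mk fun k => if k = 0 then 0 else ((((α + β) * k - 2).choose (β * k) : ℕ) : ℚ))
      = gfOf (Gs α β true true) := by
  refine PowerSeries.ext fun k => ?_
  rw [PowerSeries.coeff_mk, coeff_gfOf]
  rcases eq_or_ne k 0 with rfl | hk
  · simp
  · rw [if_neg hk, if_neg hk, Gs_eq_Qset,
      ncard_Qset_ee _ _ (Qs_helper hα hβ k hk).1 (Qs_helper hα hβ k hk).2, add_mul]

lemma gen_eq (hα : 0 < α) (hβ : 0 < β) :
    (PowerSeries.mk fun k => if k = 0 then 0 else ((((α + β) * k - 2).choose (α * k - 1) : ℕ) : ℚ))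
      = gfOf (Gs α β true false) := by
  refine PowerSeries.ext fun k => ?_
  rw [PowerSeries.coeff_mk, coeff_gfOf]
  rcases eq_or_ne k 0 with rfl | hk
  · simp
  · rw [if_neg hk, if_neg hk, Gs_eq_Qset,
      ncard_Qset_en _ _ (Qs_helper hα hβ k hk).1 (Qs_helper hα hβ k hk).2, add_mul]

lemma gen_eq' (hα : 0 < α) (hβ : 0 < β) :
    (PowerSeries.mk fun k => if k = 0 then 0 else ((((α + β) * k - 2).choose (α * k - 1) : ℕ) : ℚ))
      = gfOf (Gs α β false true) := by
  refine PowerSeries.ext fun k => ?_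
  rw [PowerSeries.coeff_mk, coeff_gfOf]
  rcases eq_or_ne k 0 with rfl | hk
  · simp
  · rw [if_neg hk, if_neg hk, Gs_eq_Qset,
      ncard_Qset_ne _ _ (Qs_helper hα hβ k hk).1 (Qs_helper hα hβ k hk).2, add_mul]

lemma gnn_eq (hα : 0 < α) (hβ : 0 < β) :
    (PowerSeries.mk fun k => if k = 0 then 0 else ((((α + β) * k - 2).choose (α * k) : ℕ) : ℚ))
      = gfOf (Gs α β false false) := by
  refine PowerSeries.ext fun k => ?_
  rw [PowerSeries.coeff_mk, coeff_gfOf]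
  rcases eq_or_ne k 0 with rfl | hk
  · simp
  · rw [if_neg hk, if_neg hk, Gs_eq_Qset,
      ncard_Qset_nn _ _ (Qs_helper hα hβ k hk).1 (Qs_helper hα hβ k hk).2, add_mul]

lemma g_eq (hα : 0 < α) (hβ : 0 < β) :
    (PowerSeries.mk fun k => if k = 0 then 0 else ((((α + β) * k).choose (α * k) : ℕ) : ℚ))
      = gfOf (Gs α β true true) + gfOf (Gs α β true false)
        + gfOf (Gs α β false true) + gfOf (Gs α β false false) := by
  refine PowerSeries.ext fun k => ?_
  rw [PowerSeries.coeff_mk]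
  simp only [map_add, coeff_gfOf]
  rcases eq_or_ne k 0 with rfl | hk
  · simp
  · rw [if_neg hk, if_neg hk, if_neg hk, if_neg hk, if_neg hk]
    have h1 : {q : LatticePath | InL α β k q} = Pset (α*k) (β*k) := by
      ext p; exact Iff.rfl
    have h2 := ncard_four_split {q : LatticePath | InL α β k q}
      (by rw [h1]; exact Pset_finite _ _)
      (fun p hp => InL_ne_nil hα (by omega) hp)
    rw [sep_Gs, sep_Gs, sep_Gs, sep_Gs, h1, ncard_Pset, ← add_mul] at h2
    rw [h2]
    push_cast
    ring

lemma f_eq (hα : 0 < α) (hβ : 0 < β) :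
    gfOf (fun k => {p | InL α β k p ∧ BounceFree α β p})
      = gfOf (Fs α β true true) + gfOf (Fs α β true false)
        + gfOf (Fs α β false true) + gfOf (Fs α β false false) := by
  refine PowerSeries.ext fun k => ?_
  simp only [map_add, coeff_gfOf]
  rcases eq_or_ne k 0 with rfl | hk
  · simp
  · rw [if_neg hk, if_neg hk, if_neg hk, if_neg hk, if_neg hk]
    have h2 := ncard_four_split {q : LatticePath | InL α β k q ∧ BounceFree α β q}
      (finite_of_counts _ (α*k) (β*k) (fun p hp => hp.1))
      (fun p hp => InL_ne_nil hα (by omega) hp.1)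
    rw [sep_Fs, sep_Fs, sep_Fs, sep_Fs] at h2
    rw [h2]
    push_cast
    ring

lemma key_series (hα : 0 < α) (hβ : 0 < β) (hcop : Nat.Coprime α β) (s t : Bool) :
    gfOf (Gs α β s t) = gfOf (Fs α β s t)
      + gfOf (Fs α β s true) * gfOf (Gs α β false t)
      + gfOf (Fs α β s false) * gfOf (Gs α β true t) := by
  refine PowerSeries.ext fun k => ?_
  rw [map_add, map_add, coeff_gfOf, coeff_gfOf, coeff_gfOf_mul, coeff_gfOf_mul]
  rcases eq_or_ne k 0 with rfl | hk
  · simp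
  · rw [if_neg hk, if_neg hk]
    rw [ncard_Gs_split hα hβ hcop (by omega)]
    push_cast [Finset.sum_add_distrib]
    ring

end Main

end S4Aux

/-- The generating function `f(x)` of bounce-free paths in
`L_{β/α}(k)` satisfies `f·((1+g_en)² − g_ee·g_nn) = g + 2·(g_en² − g_ee·g_nn)`. -/
theorem statement4 (α β : ℕ) (hα : 0 < α) (hβ : 0 < β) (hcop : Nat.Coprime α β) :
    fSer α β * ((1 + genSer α β) ^ 2 - geeSer α β * gnnSer α β)
      = gSer α β + 2 * (genSer α β ^ 2 - geeSer α β * gnnSer α β) := by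
  have hee : geeSer α β = gfOf (S4Aux.Gs α β true true) := S4Aux.gee_eq hα hβ
  have hen : genSer α β = gfOf (S4Aux.Gs α β true false) := S4Aux.gen_eq hα hβ
  have hne : genSer α β = gfOf (S4Aux.Gs α β false true) := S4Aux.gen_eq' hα hβ
  have hnn : gnnSer α β = gfOf (S4Aux.Gs α β false false) := S4Aux.gnn_eq hα hβ
  have hg : gSer α β = gfOf (S4Aux.Gs α β true true) + gfOf (S4Aux.Gs α β true false)
      + gfOf (S4Aux.Gs α β false true) + gfOf (S4Aux.Gs α β false false) := S4Aux.g_eq hα hβ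
  have hf : fSer α β = gfOf (S4Aux.Fs α β true true) + gfOf (S4Aux.Fs α β true false)
      + gfOf (S4Aux.Fs α β false true) + gfOf (S4Aux.Fs α β false false) := S4Aux.f_eq hα hβ
  have hb2 : gfOf (S4Aux.Gs α β false true) = gfOf (S4Aux.Gs α β true false) := by
    rw [← hne, hen]
  have h1 := S4Aux.key_series hα hβ hcop true true
  have h2 := S4Aux.key_series hα hβ hcop true false
  have h3 := S4Aux.key_series hα hβ hcop false true
  have h4 := S4Aux.key_series hα hβ hcop false false
  rw [hee, hen, hnn, hg, hf, hb2]
  rw [hb2] at h1 h3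
  set a := gfOf (S4Aux.Gs α β true true)
  set b := gfOf (S4Aux.Gs α β true false)
  set c := gfOf (S4Aux.Gs α β false false)
  linear_combination (c - 1 - b) * h1 + (a - 1 - b) * h2 + (c - 1 - b) * h3 + (a - 1 - b) * h4
end
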